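/- arXiv:math/0611817 — 3 statements merged into one kernel-verified Lean document; each statement's English description precedes it below -/
import Mathlib

section
/- (Alexander's lemma for the closed disc.) Let K₁, K₂ be disjoint closed subsets of the closed unit disc D² ⊆ ℝ², and let x, y ∈ D² ∖ (K₁ ∪ K₂). If there is a path joining x and y in D² ∖ K₁ and a path joining x and y in D² ∖ K₂, then there is a path joining x and y in D² ∖ (K₁ ∪ K₂). -/
open Complex Metric Set

noncomputable section AlexanderAux

/-- A continuous integer-valued function on `ℝ` takes equal values. -/
lemma alex_int_const {h : ℝ → ℝ} (hc : Continuous h) (hint : ∀ t, ∃ n : ℤ, h t = n)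
    (a b : ℝ) : h a = h b := by
  by_contra hne
  obtain ⟨n, hn⟩ := hint a
  obtain ⟨m, hm⟩ := hint b
  have hnm : n ≠ m := by
    rintro rfl; exact hne (hn.trans hm.symm)
  have hv : ∃ v : ℝ, v ∈ Set.uIcc (h a) (h b) ∧ ∃ k0 : ℤ, v = (k0 : ℝ) + 1/2 := by
    rcases le_total n m with h' | h'
    · have hle : (n : ℝ) + 1 ≤ m := by
        exact_mod_cast Int.add_one_le_iff.mpr (lt_of_le_of_ne h' hnm)
      exact ⟨(n : ℝ) + 1/2, Set.mem_uIcc.mpr (Or.inl ⟨by rw [hn]; linarith,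
        by rw [hm]; linarith⟩), n, rfl⟩
    · have hle : (m : ℝ) + 1 ≤ n := by
        exact_mod_cast Int.add_one_le_iff.mpr (lt_of_le_of_ne h' (Ne.symm hnm))
      exact ⟨(m : ℝ) + 1/2, Set.mem_uIcc.mpr (Or.inr ⟨by rw [hm]; linarith,
        by rw [hn]; linarith⟩), m, rfl⟩
  obtain ⟨v, hv, k0, rfl⟩ := hv
  obtain ⟨c, -, hc'⟩ := intermediate_value_uIcc (a := a) (b := b) hc.continuousOn hv
  obtain ⟨k, hk⟩ := hint c
  rw [hk] at hc'
  have h2 : (2 * k : ℝ) = 2 * k0 + 1 := by linarith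
  have : (2 * k : ℤ) = 2 * k0 + 1 := by exact_mod_cast h2
  omega

/-- There is no continuous logarithm of `z - c` on a circle centered at `c`. -/
lemma alex_no_log_sphere {c : ℂ} {r : ℝ} (hr : 0 < r) {g : ℂ → ℂ}
    (hg : ContinuousOn g (sphere c r)) (hlog : ∀ z ∈ sphere c r, exp (g z) = z - c) :
    False := by
  set φ : ℝ → ℂ := fun θ => c + (r : ℂ) * exp (θ * I) with hφ
  have hφc : Continuous φ := by
    apply continuous_const.add
    exact continuous_const.mul (Complex.continuous_exp.comp
      ((Complex.continuous_ofReal.mul continuous_const)))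
  have hφmem : ∀ θ : ℝ, φ θ ∈ sphere c r := by
    intro θ
    simp only [hφ, mem_sphere_iff_norm, add_sub_cancel_left, norm_mul]
    rw [Complex.norm_real, Complex.norm_exp_ofReal_mul_I,
      mul_one, Real.norm_eq_abs, abs_of_pos hr]
  set lam : ℝ → ℂ := fun θ => g (φ θ) - (Real.log r + θ * I) with hlam
  have hlamc : Continuous lam := by
    apply Continuous.sub
    · exact hg.comp_continuous hφc hφmem
    · exact continuous_const.add (Complex.continuous_ofReal.mul continuous_const)
  have hexp : ∀ θ : ℝ, exp (lam θ) = 1 := by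
    intro θ
    have h1 : exp (g (φ θ)) = (r : ℂ) * exp (θ * I) := by
      rw [hlog _ (hφmem θ)]; simp [hφ]
    have h2 : exp ((Real.log r : ℂ) + θ * I) = (r : ℂ) * exp (θ * I) := by
      rw [Complex.exp_add]
      congr 1
      rw [← Complex.ofReal_exp, Real.exp_log hr]
    rw [hlam]
    simp only
    rw [Complex.exp_sub, h1, h2, div_self]
    apply mul_ne_zero
    · exact_mod_cast hr.ne'
    · exact Complex.exp_ne_zero _
  set h : ℝ → ℝ := fun θ => (lam θ).im / (2 * Real.pi) with hh
  have hint : ∀ θ, ∃ n : ℤ, h θ = n := by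
    intro θ
    obtain ⟨n, hn⟩ := Complex.exp_eq_one_iff.mp (hexp θ)
    refine ⟨n, ?_⟩
    rw [hh]
    simp only
    rw [hn]
    have : ((n : ℂ) * (2 * ↑Real.pi * I)).im = n * (2 * Real.pi) := by
      simp [Complex.mul_im]
    rw [this, mul_div_assoc, div_self (by positivity), mul_one]
  have hcont : Continuous h := (Complex.continuous_im.comp hlamc).div_const _
  have key := alex_int_const hcont hint 0 (2 * Real.pi)
  -- φ (2π) = φ 0
  have hphi : φ (2 * Real.pi) = φ 0 := by
    simp only [hφ]
    congr 1
    rw [Complex.ofReal_mul, Complex.ofReal_ofNat]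
    rw [Complex.exp_two_pi_mul_I]
    simp
  have him : (lam (2 * Real.pi)).im = (lam 0).im - 2 * Real.pi := by
    simp only [hlam, hphi]
    simp [Complex.sub_im, Complex.add_im, Complex.mul_im]
  rw [hh] at key
  simp only at key
  rw [him] at key
  have hpi : (2 * Real.pi) ≠ 0 := by positivity
  field_simp at key
  linarith [Real.pi_pos]

/-- If `F : [0,1] × K → ℂ∖{0}` is continuous on a compact set `K` and `F 1 · = 1`,
then `F 0 ·` admits a continuous logarithm on `K`. -/
lemma alex_log_of_contraction {K : Set ℂ} (hK : IsCompact K) {F : ℝ → ℂ → ℂ}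
    (hF : ContinuousOn (fun p : ℝ × ℂ => F p.1 p.2) (Set.Icc 0 1 ×ˢ K))
    (hne : ∀ t ∈ Set.Icc (0:ℝ) 1, ∀ z ∈ K, F t z ≠ 0)
    (hF1 : ∀ z ∈ K, F 1 z = 1) :
    ∃ g : ℂ → ℂ, ContinuousOn g K ∧ ∀ z ∈ K, exp (g z) = F 0 z := by
  rcases K.eq_empty_or_nonempty with rfl | hKne
  · exact ⟨0, continuousOn_empty _, by simp⟩
  have hPc : IsCompact (Set.Icc (0:ℝ) 1 ×ˢ K) := isCompact_Icc.prod hK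
  obtain ⟨z₀, hz₀⟩ := hKne
  have hPne : (Set.Icc (0:ℝ) 1 ×ˢ K).Nonempty :=
    ⟨(0, z₀), Set.mem_Icc.mpr ⟨le_refl 0, zero_le_one⟩, hz₀⟩
  obtain ⟨p₀, hp₀P, hp₀'⟩ := hPc.exists_isMinOn hPne hF.norm
  have hp₀ : ∀ q ∈ Set.Icc (0:ℝ) 1 ×ˢ K, ‖F p₀.1 p₀.2‖ ≤ ‖F q.1 q.2‖ := fun q hq => hp₀' hq
  set m : ℝ := ‖F p₀.1 p₀.2‖ with hm
  have hm0 : 0 < m := norm_pos_iff.mpr (hne _ hp₀P.1 _ hp₀P.2)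
  have hmle : ∀ s ∈ Set.Icc (0:ℝ) 1, ∀ z ∈ K, m ≤ ‖F s z‖ := by
    intro s hs z hz; exact hp₀ (s, z) ⟨hs, hz⟩
  have hUC := hPc.uniformContinuousOn_of_continuous hF
  rw [Metric.uniformContinuousOn_iff] at hUC
  obtain ⟨δ, hδ0, hδ⟩ := hUC (m/2) (by positivity)
  obtain ⟨n0, hn0⟩ := exists_nat_one_div_lt hδ0
  set N : ℕ := n0 + 1 with hN
  have hN0 : 0 < (N:ℝ) := by positivity
  have hNδ : 1 / (N:ℝ) < δ := by
    have : ((n0:ℝ) + 1) = (N:ℝ) := by push_cast [hN]; ring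
    rw [← this]; exact hn0
  set t : ℕ → ℝ := fun i => (i:ℝ)/N with htdef
  have ht : ∀ i, i ≤ N → t i ∈ Set.Icc (0:ℝ) 1 := by
    intro i hi
    constructor
    · positivity
    · rw [div_le_one hN0]; exact_mod_cast hi
  have hFne : ∀ i, i ≤ N → ∀ z ∈ K, F (t i) z ≠ 0 := fun i hi z hz => hne _ (ht i hi) z hz
  have hstep : ∀ i, i < N → ∀ z ∈ K, ‖F (t i) z / F (t (i+1)) z - 1‖ < 1/2 := by
    intro i hi z hz
    have hi1 : i + 1 ≤ N := hi
    have hb := hmle _ (ht (i+1) hi1) z hz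
    have hbne := hFne (i+1) hi1 z hz
    have hdist : dist ((t i, z) : ℝ × ℂ) ((t (i+1), z)) < δ := by
      rw [Prod.dist_eq]
      simp only [dist_self]
      rw [max_eq_left dist_nonneg]
      rw [Real.dist_eq, htdef]
      have : ((i:ℝ))/N - ((i+1:ℕ):ℝ)/N = -(1/N) := by push_cast; field_simp; ring
      rw [this, abs_neg, abs_of_pos (by positivity)]
      exact hNδ
    have hnum : ‖F (t i) z - F (t (i+1)) z‖ < m/2 := by
      have := hδ (t i, z) ⟨ht i hi.le, hz⟩ (t (i+1), z) ⟨ht (i+1) hi1, hz⟩ hdist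
      rwa [dist_eq_norm] at this
    have : F (t i) z / F (t (i+1)) z - 1 = (F (t i) z - F (t (i+1)) z) / F (t (i+1)) z := by
      field_simp
    rw [this, norm_div, div_lt_iff₀ (norm_pos_iff.mpr hbne)]
    have hbig : m / 2 ≤ 1/2 * ‖F (t (i+1)) z‖ := by linarith
    linarith
  have hslit : ∀ i, i < N → ∀ z ∈ K, F (t i) z / F (t (i+1)) z ∈ Complex.slitPlane := by
    intro i hi z hz
    have h2 := hstep i hi z hz
    apply Or.inl
    set w := F (t i) z / F (t (i+1)) z
    have : |(w - 1).re| ≤ ‖w - 1‖ := by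
      exact Complex.abs_re_le_norm _
    have hre : (w - 1).re = w.re - 1 := by simp
    have : |w.re - 1| < 1/2 := by rw [← hre]; exact lt_of_le_of_lt this h2
    have := abs_lt.mp this
    linarith [this.1]
  have hFcont : ∀ s ∈ Set.Icc (0:ℝ) 1, ContinuousOn (fun z => F s z) K := by
    intro s hs
    have : (fun z => F s z) = (fun p : ℝ × ℂ => F p.1 p.2) ∘ (fun z => (s, z)) := rfl
    rw [this]
    exact hF.comp (continuous_const.prodMk continuous_id).continuousOn
      (fun z hz => ⟨hs, hz⟩)
  refine ⟨fun z => ∑ i ∈ Finset.range N, Complex.log (F (t i) z / F (t (i+1)) z), ?_, ?_⟩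
  · apply continuousOn_finset_sum
    intro i hi
    rw [Finset.mem_range] at hi
    refine ContinuousOn.clog ?_ (fun z hz => hslit i hi z hz)
    exact (hFcont _ (ht i hi.le)).div (hFcont _ (ht (i+1) hi)) (fun z hz => hFne (i+1) hi z hz)
  · intro z hz
    rw [Complex.exp_sum]
    have heach : ∀ i ∈ Finset.range N,
        exp (Complex.log (F (t i) z / F (t (i+1)) z)) = F (t i) z / F (t (i+1)) z := by
      intro i hi
      rw [Finset.mem_range] at hi
      exact Complex.exp_log (div_ne_zero (hFne i hi.le z hz) (hFne (i+1) hi z hz))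
    rw [Finset.prod_congr rfl heach]
    have tele : ∀ M, M ≤ N →
        ∏ i ∈ Finset.range M, (F (t i) z / F (t (i+1)) z) = F (t 0) z / F (t M) z := by
      intro M
      induction M with
      | zero => intro _; simp [div_self (hFne 0 (Nat.zero_le _) z hz)]
      | succ M ih =>
        intro hM
        rw [Finset.prod_range_succ, ih (Nat.le_of_succ_le hM), div_mul_div_comm,
          mul_comm (F (t M) z) (F (t (M+1)) z), mul_div_mul_right _ _
          (hFne M (Nat.le_of_succ_le hM) z hz)]
    rw [tele N le_rfl]
    have ht0 : t 0 = 0 := by simp [htdef]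
    have htN : t N = 1 := by rw [htdef]; exact div_self hN0.ne'
    rw [ht0, htN, hF1 z hz, div_one]

/-- A path from `x` to `y` avoiding a compact set `K` gives a continuous logarithm of
`(z - x)/(z - y)` on `K`. -/
lemma alex_log_of_path {K : Set ℂ} (hK : IsCompact K) {x y : ℂ}
    (hy : y ∉ K) (p : Path x y) (hp : ∀ t, p t ∉ K) :
    ∃ g : ℂ → ℂ, ContinuousOn g K ∧ ∀ z ∈ K, exp (g z) = (z - x) / (z - y) := by
  have hyne : ∀ z ∈ K, z - y ≠ 0 := by
    intro z hz h
    rw [sub_eq_zero] at h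
    exact hy (h ▸ hz)
  have hpne : ∀ t ∈ Set.Icc (0:ℝ) 1, ∀ z ∈ K, z - p.extend t ≠ 0 := by
    intro t ht z hz h
    rw [sub_eq_zero] at h
    have : p.extend t = p ⟨t, ht⟩ := p.extend_apply ht
    exact hp ⟨t, ht⟩ (by rw [← this, ← h]; exact hz)
  have hFc : ContinuousOn (fun q : ℝ × ℂ => (q.2 - p.extend q.1) / (q.2 - y))
      (Set.Icc (0:ℝ) 1 ×ˢ K) := by
    apply ContinuousOn.div
    · exact (continuous_snd.sub (p.continuous_extend.comp continuous_fst)).continuousOn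
    · exact (continuous_snd.sub continuous_const).continuousOn
    · exact fun q hq => hyne q.2 hq.2
  have hFne : ∀ t ∈ Set.Icc (0:ℝ) 1, ∀ z ∈ K, (z - p.extend t) / (z - y) ≠ 0 :=
    fun t ht z hz => div_ne_zero (hpne t ht z hz) (hyne z hz)
  have hF1 : ∀ z ∈ K, (z - p.extend 1) / (z - y) = 1 := by
    intro z hz; rw [p.extend_one, div_self (hyne z hz)]
  obtain ⟨g, hgc, hge⟩ := alex_log_of_contraction
    (F := fun t z => (z - p.extend t) / (z - y)) hK hFc hFne hF1
  refine ⟨g, hgc, fun z hz => ?_⟩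
  rw [hge z hz, p.extend_zero]

/-- Glue continuous functions on two disjoint closed sets. -/
lemma alex_glue {K₁ K₂ : Set ℂ} (h₁c : IsClosed K₁) (h₂c : IsClosed K₂)
    (hd : Disjoint K₁ K₂) {g₁ g₂ : ℂ → ℂ}
    (hg₁ : ContinuousOn g₁ K₁) (hg₂ : ContinuousOn g₂ K₂) :
    ∃ g : ℂ → ℂ, ContinuousOn g (K₁ ∪ K₂) ∧ Set.EqOn g g₁ K₁ ∧ Set.EqOn g g₂ K₂ := by
  classical
  refine ⟨fun z => if z ∈ K₁ then g₁ z else g₂ z, ?_, ?_, ?_⟩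
  · intro z hz
    rcases hz with hz | hz
    · have h2 : K₂ᶜ ∈ nhds z := h₂c.isOpen_compl.mem_nhds (Set.disjoint_left.mp hd hz)
      rw [← continuousWithinAt_inter h2]
      have heq : (K₁ ∪ K₂) ∩ K₂ᶜ = K₁ ∩ K₂ᶜ := by
        ext w; simp only [Set.mem_inter_iff, Set.mem_union, Set.mem_compl_iff]; tauto
      rw [heq]
      refine ContinuousWithinAt.congr ((hg₁ z hz).mono
        (Set.inter_subset_left (s := K₁) (t := K₂ᶜ)))
        (fun w hw => if_pos hw.1) (if_pos hz)
    · by_cases hz1 : z ∈ K₁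
      · have h2 : K₂ᶜ ∈ nhds z := h₂c.isOpen_compl.mem_nhds (Set.disjoint_left.mp hd hz1)
        rw [← continuousWithinAt_inter h2]
        have heq : (K₁ ∪ K₂) ∩ K₂ᶜ = K₁ ∩ K₂ᶜ := by
          ext w; simp only [Set.mem_inter_iff, Set.mem_union, Set.mem_compl_iff]; tauto
        rw [heq]
        exact ContinuousWithinAt.congr ((hg₁ z hz1).mono
          (Set.inter_subset_left (s := K₁) (t := K₂ᶜ)))
          (fun w hw => if_pos hw.1) (if_pos hz1)
      · have h1 : K₁ᶜ ∈ nhds z := h₁c.isOpen_compl.mem_nhds hz1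
        rw [← continuousWithinAt_inter h1]
        have heq : (K₁ ∪ K₂) ∩ K₁ᶜ = K₂ ∩ K₁ᶜ := by
          ext w; simp only [Set.mem_inter_iff, Set.mem_union, Set.mem_compl_iff]; tauto
        rw [heq]
        exact ContinuousWithinAt.congr ((hg₂ z hz).mono
          (Set.inter_subset_left (s := K₂) (t := K₁ᶜ)))
          (fun w hw => if_neg hw.2) (if_neg hz1)
  · exact fun z hz => if_pos hz
  · exact fun z hz => if_neg (Set.disjoint_right.mp hd hz)

/-- Transfer of `JoinedIn` along a map which is continuous on the source set. -/
lemma JoinedIn.image_continuousOn {X Y : Type*} [TopologicalSpace X] [TopologicalSpace Y]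
    {s : Set X} {t : Set Y} {f : X → Y} {u v : X}
    (h : JoinedIn s u v) (hf : ContinuousOn f s) (hst : Set.MapsTo f s t) :
    JoinedIn t (f u) (f v) := by
  obtain ⟨p, hp⟩ := h
  refine ⟨⟨⟨fun τ => f (p τ), hf.comp_continuous p.continuous (fun τ => hp τ)⟩, ?_, ?_⟩,
    fun τ => hst (hp τ)⟩ <;> simp

lemma alex_polar_norm (ρ θ : ℝ) (hρ : 0 ≤ ρ) : ‖(ρ:ℂ) * exp ((θ:ℂ) * I)‖ = ρ := by
  rw [norm_mul, Complex.norm_real, Real.norm_eq_abs,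
    Complex.norm_exp_ofReal_mul_I, mul_one, _root_.abs_of_nonneg hρ]

lemma alex_joined_norm_gt {a : ℝ} (ha : 0 ≤ a) {z w : ℂ} (hz : a < ‖z‖) (hw : a < ‖w‖) :
    JoinedIn {v : ℂ | a < ‖v‖} z w := by
  set f : ℝ → ℂ := fun τ =>
    (((1-τ) * ‖z‖ + τ * ‖w‖ : ℝ) : ℂ) * exp ((((1-τ) * z.arg + τ * w.arg : ℝ) : ℂ) * I)
    with hf
  have hfc : Continuous f := by
    apply Continuous.mul
    · exact Complex.continuous_ofReal.comp (by continuity)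
    · exact Complex.continuous_exp.comp
        ((Complex.continuous_ofReal.comp (by continuity)).mul continuous_const)
  have hnorm : ∀ τ : ℝ, 0 ≤ τ → τ ≤ 1 → a < ‖f τ‖ := by
    intro τ h0 h1
    have hρ : (0:ℝ) ≤ (1-τ) * ‖z‖ + τ * ‖w‖ := by
      have := norm_nonneg z; have := norm_nonneg w; nlinarith
    rw [hf]
    simp only
    rw [alex_polar_norm _ _ hρ]
    have hmin : min ‖z‖ ‖w‖ ≤ (1-τ) * ‖z‖ + τ * ‖w‖ := by
      rcases le_total ‖z‖ ‖w‖ with h | h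
      · rw [min_eq_left h]; nlinarith
      · rw [min_eq_right h]; nlinarith
    exact lt_of_lt_of_le (lt_min hz hw) hmin
  have hz0 : f 0 = z := by
    rw [hf]
    simp only [sub_zero, one_mul, zero_mul, add_zero]
    exact Complex.norm_mul_exp_arg_mul_I z
  have hz1 : f 1 = w := by
    rw [hf]
    simp only [sub_self, zero_mul, one_mul, zero_add]
    exact Complex.norm_mul_exp_arg_mul_I w
  exact ⟨⟨⟨fun τ => f τ, hfc.comp continuous_subtype_val⟩, hz0, hz1⟩,
    fun τ => hnorm τ τ.2.1 τ.2.2⟩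

/-- The exterior of a ball in `ℂ` is path connected. -/
lemma alex_pathConnected_compl {a : ℝ} (ha : 0 ≤ a) :
    IsPathConnected {z : ℂ | a < ‖z‖} := by
  have hwmem : a < ‖((a+1 : ℝ) : ℂ)‖ := by
    rw [Complex.norm_real, Real.norm_eq_abs, abs_of_pos (by linarith)]; linarith
  refine ⟨((a+1 : ℝ) : ℂ), hwmem, ?_⟩
  intro z hz
  exact alex_joined_norm_gt ha hwmem hz

/-- Core separation lemma: if `(z-x)/(z-y)` has a continuous logarithm on the compact set
`K`, then `y` cannot lie outside the (bounded) connected component of `x` in `Kᶜ`. -/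
lemma alex_core {K : Set ℂ} (hK : IsCompact K) {x y : ℂ} (hx : x ∉ K) (hy : y ∉ K)
    (hxy : x ≠ y) {g : ℂ → ℂ} (hg : ContinuousOn g K)
    (hlog : ∀ z ∈ K, exp (g z) = (z - x) / (z - y))
    (hbd : Bornology.IsBounded (connectedComponentIn Kᶜ x))
    (hyC : y ∉ connectedComponentIn Kᶜ x) : False := by
  classical
  set C := connectedComponentIn Kᶜ x with hC
  have hKc : IsClosed K := hK.isClosed
  have hopen : IsOpen Kᶜ := hKc.isOpen_compl
  have hCo : IsOpen C := hopen.connectedComponentIn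
  have hxC : x ∈ C := mem_connectedComponentIn hx
  have hCsub : C ⊆ Kᶜ := connectedComponentIn_subset _ _
  -- the frontier of C is contained in K
  have hfr : frontier C ⊆ K := by
    intro z hz
    rw [hCo.frontier_eq] at hz
    by_contra hzK
    obtain ⟨ε, hε0, hball⟩ := Metric.isOpen_iff.mp hopen z hzK
    obtain ⟨w, hwC, hwd⟩ := Metric.mem_closure_iff.mp hz.1 ε hε0
    have hwb : w ∈ Metric.ball z ε := Metric.mem_ball'.mpr hwd
    have hpre : IsPreconnected (Metric.ball z ε ∪ C) :=
      IsPreconnected.union w hwb hwC (convex_ball z ε).isPreconnected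
        isPreconnected_connectedComponentIn
    have hsub2 : Metric.ball z ε ∪ C ⊆ Kᶜ := Set.union_subset hball hCsub
    have hzC : z ∈ C :=
      hpre.subset_connectedComponentIn (Or.inr hxC) hsub2 (Or.inl (Metric.mem_ball_self hε0))
    exact hz.2 hzC
  have hycl : y ∉ closure C := by
    intro h
    rcases em (y ∈ C) with h' | h'
    · exact hyC h'
    · exact hy (hfr (by rw [hCo.frontier_eq]; exact ⟨h, h'⟩))
  have hyne : ∀ z ∈ closure C, z - y ≠ 0 := by
    intro z hz h
    rw [sub_eq_zero] at h
    exact hycl (h ▸ hz)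
  -- choose a small radius r
  have hdxy : 0 < dist x y := dist_pos.mpr hxy
  obtain ⟨ε₀, hε₀, hball₀⟩ := Metric.isOpen_iff.mp hCo x hxC
  set r : ℝ := min (ε₀/2) (dist x y / 2) with hr
  have hr0 : 0 < r := lt_min (by linarith) (by linarith)
  have hrd : r < dist x y := lt_of_le_of_lt (min_le_right _ _) (by linarith)
  have hrball : Metric.closedBall x r ⊆ C := by
    intro z hz
    apply hball₀
    rw [Metric.mem_ball]
    calc dist z x ≤ r := Metric.mem_closedBall.mp hz
      _ ≤ ε₀/2 := min_le_left _ _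
      _ < ε₀ := by linarith
  -- choose a big radius R
  obtain ⟨R, hRr, hRsub⟩ := hbd.closure.subset_closedBall_lt r x
  have hR0 : 0 < R := lt_trans hr0 hRr
  have hRC : ∀ z ∈ Metric.sphere x (R + 1), z ∉ closure C := by
    intro z hz hzc
    have := hRsub hzc
    rw [Metric.mem_closedBall] at this
    rw [Metric.mem_sphere] at hz
    linarith
  -- Tietze extension of g
  obtain ⟨G, hG⟩ := ContinuousMap.exists_restrict_eq (X := ℂ) (Y := ℂ) hKc
    ⟨K.restrict g, continuousOn_iff_continuous_restrict.mp hg⟩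
  have hGK : ∀ z ∈ K, G z = g z := by
    intro z hz
    have := congrFun (congrArg DFunLike.coe hG) ⟨z, hz⟩
    exact this
  set u : ℂ → ℂ := fun z => (z - x) / (z - y) * exp (-G z) with hu
  set w : ℂ → ℂ := fun z => if z ∈ closure C then u z else 1 with hwdef
  set A : Set ℂ := Metric.closedBall x (R + 1) \ Metric.ball x r with hA
  have huK : ∀ z ∈ K, u z = 1 := by
    intro z hz
    rw [hu]
    simp only
    rw [hGK z hz, ← hlog z hz, ← Complex.exp_add, add_neg_cancel, Complex.exp_zero]
  have hucont : ContinuousOn u (closure C) := by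
    apply ContinuousOn.mul
    · exact ContinuousOn.div (continuous_id.sub continuous_const).continuousOn
        (continuous_id.sub continuous_const).continuousOn hyne
    · exact (Complex.continuous_exp.comp (G.continuous.neg)).continuousOn
  have hwc : ContinuousOn w A := by
    rw [hwdef]
    apply ContinuousOn.if
    · intro a ha
      have haK : a ∈ K := hfr (frontier_closure_subset ha.2)
      exact huK a haK
    · refine hucont.mono ?_
      intro z hz
      have := hz.2
      rwa [show {a : ℂ | a ∈ closure C} = closure C from rfl, closure_closure] at this
    · exact continuousOn_const
  have hwne : ∀ z ∈ A, w z ≠ 0 := by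
    intro z hz
    rw [hwdef]
    simp only
    split_ifs with h
    · refine mul_ne_zero (div_ne_zero ?_ (hyne z h)) (Complex.exp_ne_zero _)
      intro h0
      rw [sub_eq_zero] at h0
      exact hz.2 (h0 ▸ Metric.mem_ball_self hr0)
    · exact one_ne_zero
  -- contract the small circle to the big circle inside the annulus A
  set ρ : ℝ → ℝ := fun t => (1-t)*r + t*(R+1) with hρ
  have hρr : ∀ t ∈ Set.Icc (0:ℝ) 1, r ≤ ρ t ∧ ρ t ≤ R + 1 := by
    intro t ht
    have e : ρ t = (1-t)*r + t*(R+1) := by simp only [hρ]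
    rw [e]
    constructor
    · nlinarith [ht.1, ht.2, hRr]
    · nlinarith [ht.1, ht.2, hRr]
  have hmaps : ∀ t ∈ Set.Icc (0:ℝ) 1, ∀ z ∈ Metric.sphere x r,
      x + ((ρ t / r : ℝ) : ℂ) * (z - x) ∈ A := by
    intro t ht z hz
    rw [Metric.mem_sphere] at hz
    have hd : dist (x + ((ρ t / r : ℝ) : ℂ) * (z - x)) x = ρ t := by
      have hρt0 : (0:ℝ) ≤ ρ t / r := div_nonneg (le_trans hr0.le (hρr t ht).1) hr0.le
      rw [dist_eq_norm, add_sub_cancel_left, norm_mul, Complex.norm_real, Real.norm_eq_abs,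
        _root_.abs_of_nonneg hρt0]
      rw [show ‖z - x‖ = dist z x from (dist_eq_norm z x).symm, hz]
      field_simp
    constructor
    · rw [Metric.mem_closedBall, hd]; exact (hρr t ht).2
    · rw [Metric.mem_ball, hd]; push_neg; exact (hρr t ht).1
  set F : ℝ → ℂ → ℂ := fun t z => w (x + ((ρ t / r : ℝ) : ℂ) * (z - x)) with hF
  have hρc : Continuous ρ := by
    rw [hρ]
    exact ((continuous_const.sub continuous_id).mul continuous_const).add
      (continuous_id.mul continuous_const)
  have hFc : ContinuousOn (fun q : ℝ × ℂ => F q.1 q.2)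
      (Set.Icc (0:ℝ) 1 ×ˢ Metric.sphere x r) := by
    apply hwc.comp
    · exact (continuous_const.add ((Complex.continuous_ofReal.comp
        ((hρc.comp continuous_fst).div_const r)).mul
        (continuous_snd.sub continuous_const))).continuousOn
    · intro q hq
      exact hmaps q.1 hq.1 q.2 hq.2
  have hFne : ∀ t ∈ Set.Icc (0:ℝ) 1, ∀ z ∈ Metric.sphere x r, F t z ≠ 0 :=
    fun t ht z hz => hwne _ (hmaps t ht z hz)
  have hF1 : ∀ z ∈ Metric.sphere x r, F 1 z = 1 := by
    intro z hz
    rw [hF]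
    simp only
    have hmem : x + ((ρ 1 / r : ℝ) : ℂ) * (z - x) ∈ Metric.sphere x (R+1) := by
      rw [Metric.mem_sphere, dist_eq_norm, add_sub_cancel_left, norm_mul, Complex.norm_real,
        Real.norm_eq_abs]
      have hρ1 : ρ 1 = R + 1 := by simp only [hρ]; ring
      rw [Metric.mem_sphere] at hz
      rw [show ‖z - x‖ = dist z x from (dist_eq_norm z x).symm, hz, hρ1,
        _root_.abs_of_nonneg (by positivity : (0:ℝ) ≤ (R+1)/r)]
      field_simp
    rw [hwdef]
    simp only
    rw [if_neg (hRC _ hmem)]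
  obtain ⟨h, hhc, hhe⟩ := alex_log_of_contraction (isCompact_sphere x r) hFc hFne hF1
  have hsphC : Metric.sphere x r ⊆ closure C :=
    fun z hz => subset_closure (hrball (Metric.sphere_subset_closedBall hz))
  have hhu : ∀ z ∈ Metric.sphere x r, exp (h z) = u z := by
    intro z hz
    rw [hhe z hz, hF]
    simp only
    have hρ0 : ρ 0 = r := by simp only [hρ]; ring
    have harg : x + ((ρ 0 / r : ℝ) : ℂ) * (z - x) = z := by
      rw [hρ0, div_self hr0.ne']
      push_cast
      ring
    rw [harg, hwdef]
    simp only
    rw [if_pos (hsphC hz)]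
  -- continuous logarithm of (z - y) on the small sphere
  have hxyne : x - y ≠ 0 := sub_ne_zero.mpr hxy
  have hFyc : ContinuousOn (fun q : ℝ × ℂ => ((1-(q.1:ℂ))*q.2 + (q.1:ℂ)*x - y)/(x - y))
      (Set.Icc (0:ℝ) 1 ×ˢ Metric.sphere x r) := by
    apply ContinuousOn.div
    · exact ((((continuous_const.sub (Complex.continuous_ofReal.comp
        continuous_fst)).mul continuous_snd).add ((Complex.continuous_ofReal.comp
        continuous_fst).mul continuous_const)).sub continuous_const).continuousOn
    · exact continuousOn_const
    · exact fun q hq => hxyne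
  have hFymem : ∀ t ∈ Set.Icc (0:ℝ) 1, ∀ z ∈ Metric.sphere x r,
      (1-(t:ℂ))*z + (t:ℂ)*x - y ≠ 0 := by
    intro t ht z hz h0
    have h1 : (1-(t:ℂ))*z + (t:ℂ)*x = y := by
      have := sub_eq_zero.mp h0
      linear_combination this
    have h2 : ‖(1-(t:ℂ))*z + (t:ℂ)*x - x‖ ≤ r := by
      have : (1-(t:ℂ))*z + (t:ℂ)*x - x = (1-(t:ℂ))*(z - x) := by ring
      rw [this, norm_mul]
      have hzx : ‖z - x‖ = r := by
        rw [show ‖z - x‖ = dist z x from (dist_eq_norm z x).symm, Metric.mem_sphere.mp hz]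
      rw [hzx]
      have ht1 : ‖(1-(t:ℂ))‖ = 1 - t := by
        rw [show (1-(t:ℂ)) = ((1-t:ℝ):ℂ) by push_cast; ring, Complex.norm_real,
          Real.norm_eq_abs, _root_.abs_of_nonneg (by linarith [ht.2])]
      rw [ht1]
      nlinarith [ht.1, hr0]
    rw [h1] at h2
    rw [show ‖y - x‖ = dist x y from by rw [dist_comm, dist_eq_norm]] at h2
    linarith
  have hFyne : ∀ t ∈ Set.Icc (0:ℝ) 1, ∀ z ∈ Metric.sphere x r,
      ((1-(t:ℂ))*z + (t:ℂ)*x - y)/(x - y) ≠ 0 := by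
    intro t ht z hz
    exact div_ne_zero (hFymem t ht z hz) hxyne
  have hFy1 : ∀ z ∈ Metric.sphere x r, ((1-(1:ℝ):ℂ)*z + ((1:ℝ):ℂ)*x - y)/(x - y) = 1 := by
    intro z hz
    push_cast
    rw [show (1-(1:ℂ))*z + 1*x - y = x - y by ring, div_self hxyne]
  obtain ⟨ly, hlyc, hlye⟩ := alex_log_of_contraction (F := fun t z =>
      ((1-(t:ℂ))*z + (t:ℂ)*x - y)/(x - y)) (isCompact_sphere x r) hFyc
      (fun t ht z hz => hFyne t ht z hz) (fun z hz => hFy1 z hz)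
  -- assemble the full logarithm of (z - x) on the small sphere
  have hfinal : ∀ z ∈ Metric.sphere x r,
      exp (h z + G z + (ly z + Complex.log (x - y))) = z - x := by
    intro z hz
    have hzy : z - y ≠ 0 := hyne z (hsphC hz)
    have e1 : exp (ly z + Complex.log (x - y)) = z - y := by
      rw [Complex.exp_add, hlye z hz, Complex.exp_log hxyne]
      push_cast
      field_simp
      ring
    have e2 : exp (h z + G z) = (z - x)/(z - y) := by
      rw [Complex.exp_add, hhu z hz, hu]
      simp only
      rw [mul_assoc, ← Complex.exp_add, neg_add_cancel, Complex.exp_zero, mul_one]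
    rw [Complex.exp_add, e1, e2, div_mul_cancel₀ _ hzy]
  have hΛc : ContinuousOn (fun z => h z + G z + (ly z + Complex.log (x - y)))
      (Metric.sphere x r) := by
    apply ContinuousOn.add
    · exact hhc.add G.continuous.continuousOn
    · exact hlyc.add continuousOn_const
  exact alex_no_log_sphere hr0 hΛc hfinal

/-- Eilenberg's criterion (hard direction): a continuous logarithm of `(z-x)/(z-y)` on a
compact set `K` implies `x` and `y` are joined in the complement. -/
lemma alex_joined_of_log {K : Set ℂ} (hK : IsCompact K) {x y : ℂ} (hx : x ∉ K) (hy : y ∉ K)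
    {g : ℂ → ℂ} (hg : ContinuousOn g K)
    (hlog : ∀ z ∈ K, exp (g z) = (z - x) / (z - y)) :
    JoinedIn Kᶜ x y := by
  have hopen : IsOpen Kᶜ := hK.isClosed.isOpen_compl
  rcases eq_or_ne x y with rfl | hxy
  · exact JoinedIn.refl hx
  by_cases hyC : y ∈ connectedComponentIn Kᶜ x
  · have hCo : IsOpen (connectedComponentIn Kᶜ x) := hopen.connectedComponentIn
    have hconn : IsConnected (connectedComponentIn Kᶜ x) :=
      isConnected_connectedComponentIn_iff.mpr hx
    have hpc : IsPathConnected (connectedComponentIn Kᶜ x) :=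
      (hCo.isConnected_iff_isPathConnected).mp hconn
    exact (hpc.joinedIn _ (mem_connectedComponentIn hx) _ hyC).mono
      (connectedComponentIn_subset _ _)
  · exfalso
    by_cases hb : Bornology.IsBounded (connectedComponentIn Kᶜ x)
    · exact alex_core hK hx hy hxy hg hlog hb hyC
    by_cases hb' : Bornology.IsBounded (connectedComponentIn Kᶜ y)
    · have hlog' : ∀ z ∈ K, exp ((fun z => -g z) z) = (z - y) / (z - x) := by
        intro z hz
        simp only
        rw [Complex.exp_neg, hlog z hz, inv_div]
      have hxC' : x ∉ connectedComponentIn Kᶜ y := by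
        intro h
        exact hyC ((connectedComponentIn_eq h).symm ▸ mem_connectedComponentIn hy)
      exact alex_core hK hy hx hxy.symm hg.neg hlog' hb' hxC'
    · obtain ⟨R₀', hR₀'⟩ := hK.isBounded.subset_closedBall 0
      set R₀ := max R₀' 0 with hR₀def
      have hKR : K ⊆ Metric.closedBall 0 R₀ :=
        hR₀'.trans (Metric.closedBall_subset_closedBall (le_max_left _ _))
      set S : Set ℂ := {z : ℂ | R₀ < ‖z‖} with hS
      have hSK : S ⊆ Kᶜ := by
        intro z hz hzK
        have := hKR hzK
        rw [Metric.mem_closedBall, dist_zero_right] at this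
        exact absurd this (not_le.mpr hz)
      have hSpre : IsPreconnected S :=
        (alex_pathConnected_compl (le_max_right _ _ : (0:ℝ) ≤ R₀)).isConnected.isPreconnected
      have hex : ∀ v : ℂ, v ∉ K → ¬Bornology.IsBounded (connectedComponentIn Kᶜ v) →
          ∃ z, z ∈ connectedComponentIn Kᶜ v ∩ S := by
        intro v hv hnb
        by_contra hcon
        push_neg at hcon
        apply hnb
        apply Bornology.IsBounded.subset (Metric.isBounded_closedBall (x := (0:ℂ)) (r := R₀))
        intro z hz
        rw [Metric.mem_closedBall, dist_zero_right]
        by_contra hgt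
        exact hcon z ⟨hz, lt_of_not_ge hgt⟩
      obtain ⟨z₁, hz₁C, hz₁S⟩ := hex x hx hb
      obtain ⟨z₂, hz₂C, hz₂S⟩ := hex y hy hb'
      have h2 : S ⊆ connectedComponentIn Kᶜ y := by
        rw [connectedComponentIn_eq hz₂C]
        exact hSpre.subset_connectedComponentIn hz₂S hSK
      have hz₁y : z₁ ∈ connectedComponentIn Kᶜ y := h2 hz₁S
      have heq : connectedComponentIn Kᶜ y = connectedComponentIn Kᶜ x := by
        rw [connectedComponentIn_eq hz₁y, connectedComponentIn_eq hz₁C]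
      exact hyC (heq ▸ mem_connectedComponentIn hy)

/-- Inversion in the unit circle. -/
def alexInv (z : ℂ) : ℂ := ((starRingEnd ℂ) z)⁻¹

lemma alexInv_norm (z : ℂ) : ‖alexInv z‖ = ‖z‖⁻¹ := by
  rw [alexInv, norm_inv, Complex.norm_conj]

lemma alexInv_invol (z : ℂ) : alexInv (alexInv z) = z := by
  rw [alexInv, alexInv, map_inv₀, Complex.conj_conj, inv_inv]

lemma alexInv_sphere {z : ℂ} (hz : ‖z‖ = 1) : alexInv z = z := by
  rw [alexInv]
  have h1 : (starRingEnd ℂ) z * z = 1 := by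
    rw [mul_comm, Complex.mul_conj]
    rw [show Complex.normSq z = ‖z‖^2 from by
      rw [Complex.normSq_eq_norm_sq], hz]
    norm_num
  exact (eq_inv_of_mul_eq_one_left (by rw [mul_comm] at h1; exact h1)).symm

/-- The folding map `ℂ → closedBall 0 1`. -/
def alexFold (z : ℂ) : ℂ := (((max 1 (Complex.normSq z))⁻¹ : ℝ) : ℂ) * z

lemma alexFold_continuous : Continuous alexFold := by
  apply Continuous.mul
  · apply Complex.continuous_ofReal.comp
    apply Continuous.inv₀ (continuous_const.max Complex.continuous_normSq)
    intro z
    have : (1:ℝ) ≤ max 1 (Complex.normSq z) := le_max_left _ _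
    linarith
  · exact continuous_id

lemma alexFold_of_le {z : ℂ} (hz : ‖z‖ ≤ 1) : alexFold z = z := by
  rw [alexFold]
  have h1 : Complex.normSq z ≤ 1 := by
    rw [Complex.normSq_eq_norm_sq]
    nlinarith [norm_nonneg z]
  rw [max_eq_left h1]
  norm_num

lemma alexFold_of_gt {z : ℂ} (hz : 1 < ‖z‖) : alexFold z = alexInv z := by
  have hz0 : z ≠ 0 := by
    intro h; rw [h, norm_zero] at hz; linarith
  have hcz : (starRingEnd ℂ) z ≠ 0 := by
    simpa using hz0
  rw [alexFold, alexInv]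
  have h1 : (1:ℝ) ≤ Complex.normSq z := by
    rw [Complex.normSq_eq_norm_sq]
    nlinarith [norm_nonneg z]
  rw [max_eq_right h1]
  have h2 : ((Complex.normSq z : ℝ) : ℂ) = z * (starRingEnd ℂ) z := (Complex.mul_conj z).symm
  rw [show ((Complex.normSq z)⁻¹ : ℝ) = ((Complex.normSq z : ℝ))⁻¹ from rfl]
  push_cast
  rw [h2]
  field_simp

/-- The centered case of Alexander's lemma in `ℂ`. -/
lemma alex_centered {K₁ K₂ : Set ℂ} (h₁c : IsCompact K₁) (h₂c : IsCompact K₂)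
    (hK₁D : K₁ ⊆ Metric.closedBall 0 1) (hK₂D : K₂ ⊆ Metric.closedBall 0 1)
    (hd : Disjoint K₁ K₂) {y : ℂ}
    (h0 : (0:ℂ) ∉ K₁ ∪ K₂) (hyD : y ∈ Metric.closedBall 0 1 \ (K₁ ∪ K₂))
    (h₁ : JoinedIn (Metric.closedBall 0 1 \ K₁) 0 y)
    (h₂ : JoinedIn (Metric.closedBall 0 1 \ K₂) 0 y) :
    JoinedIn (Metric.closedBall 0 1 \ (K₁ ∪ K₂)) 0 y := by
  classical
  set K := K₁ ∪ K₂ with hKdef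
  have hKc : IsClosed K := (h₁c.isClosed).union (h₂c.isClosed)
  -- a small ball around 0 avoids K
  obtain ⟨ε, hε0, hεball⟩ := Metric.isOpen_iff.mp hKc.isOpen_compl 0 (by exact h0)
  have hKε : ∀ k ∈ K, ε ≤ ‖k‖ := by
    intro k hk
    by_contra hlt
    rw [not_le] at hlt
    exact hεball (by rw [Metric.mem_ball, dist_zero_right]; exact hlt) hk
  have hKne0 : ∀ k ∈ K, k ≠ 0 := by
    intro k hk h
    rw [h] at hk
    exact h0 hk
  -- symmetrized compact sets
  have hinvcont : ∀ {S : Set ℂ}, S ⊆ K → ContinuousOn alexInv S := by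
    intro S hS
    apply ContinuousOn.inv₀
    · exact Complex.continuous_conj.continuousOn
    · intro k hk
      simpa using hKne0 k (hS hk)
  set L₁ : Set ℂ := K₁ ∪ alexInv '' K₁ with hL₁
  set L₂ : Set ℂ := K₂ ∪ alexInv '' K₂ with hL₂
  have hL₁cpt : IsCompact L₁ :=
    h₁c.union (h₁c.image_of_continuousOn (hinvcont (Set.subset_union_left)))
  have hL₂cpt : IsCompact L₂ :=
    h₂c.union (h₂c.image_of_continuousOn (hinvcont (Set.subset_union_right)))
  -- points of small norm in the inverted images are already in the original sets
  have hA : ∀ (S : Set ℂ), S ⊆ K → S ⊆ Metric.closedBall 0 1 →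
      ∀ z, ‖z‖ ≤ 1 → z ∈ alexInv '' S → z ∈ S := by
    rintro S hSK hSD z hz ⟨k, hk, hkz⟩
    have hk1 : ‖k‖ ≤ 1 := by
      have := hSD hk; rwa [Metric.mem_closedBall, dist_zero_right] at this
    have hk0 : 0 < ‖k‖ := norm_pos_iff.mpr (hKne0 k (hSK hk))
    have h1 : 1 ≤ ‖z‖ := by
      rw [← hkz, alexInv_norm]
      exact one_le_inv_iff₀.mpr ⟨hk0, hk1⟩
    have hz1 : ‖z‖ = 1 := le_antisymm hz h1
    have hknorm : ‖k‖ = 1 := by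
      have := alexInv_norm k
      rw [hkz, hz1] at this
      have : ‖k‖⁻¹ = 1 := this.symm
      rwa [inv_eq_one] at this
    have : z = k := by rw [← hkz, alexInv_sphere hknorm]
    rwa [this]
  have hnotL₁ : ∀ z ∈ Metric.closedBall 0 1 \ K₁, z ∉ L₁ := by
    intro z hz hzL
    rcases hzL with h | h
    · exact hz.2 h
    · exact hz.2 (hA K₁ Set.subset_union_left hK₁D z (mem_closedBall_zero_iff.mp hz.1) h)
  have hnotL₂ : ∀ z ∈ Metric.closedBall 0 1 \ K₂, z ∉ L₂ := by
    intro z hz hzL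
    rcases hzL with h | h
    · exact hz.2 h
    · exact hz.2 (hA K₂ Set.subset_union_right hK₂D z (mem_closedBall_zero_iff.mp hz.1) h)
  have hdisjL : Disjoint L₁ L₂ := by
    rw [Set.disjoint_left]
    intro z hz1 hz2
    have hz1' : z ∈ K₁ ∨ z ∈ alexInv '' K₁ := hz1
    have hz2' : z ∈ K₂ ∨ z ∈ alexInv '' K₂ := hz2
    rcases hz1' with h1 | h1 <;> rcases hz2' with h2 | h2
    · exact Set.disjoint_left.mp hd h1 h2
    · exact Set.disjoint_left.mp hd h1
        (hA K₂ Set.subset_union_right hK₂D z (mem_closedBall_zero_iff.mp (hK₁D h1)) h2)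
    · exact Set.disjoint_left.mp hd
        (hA K₁ Set.subset_union_left hK₁D z (mem_closedBall_zero_iff.mp (hK₂D h2)) h1) h2
    · obtain ⟨k₁, hk₁, hk₁z⟩ := h1
      obtain ⟨k₂, hk₂, hk₂z⟩ := h2
      have heq : k₁ = k₂ := by
        have h' := congrArg alexInv (hk₁z.trans hk₂z.symm)
        rwa [alexInv_invol, alexInv_invol] at h'
      exact Set.disjoint_left.mp hd hk₁ (heq ▸ hk₂)
  have h0L₁ : (0:ℂ) ∉ L₁ := hnotL₁ 0 ⟨by simp, fun h => h0 (Or.inl h)⟩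
  have h0L₂ : (0:ℂ) ∉ L₂ := hnotL₂ 0 ⟨by simp, fun h => h0 (Or.inr h)⟩
  have hyL₁ : y ∉ L₁ := hnotL₁ y ⟨hyD.1, fun h => hyD.2 (Or.inl h)⟩
  have hyL₂ : y ∉ L₂ := hnotL₂ y ⟨hyD.1, fun h => hyD.2 (Or.inr h)⟩
  obtain ⟨p₁, hp₁⟩ := h₁
  have hp₁' : ∀ t, p₁ t ∉ L₁ := fun t => hnotL₁ _ (hp₁ t)
  obtain ⟨p₂, hp₂⟩ := h₂
  have hp₂' : ∀ t, p₂ t ∉ L₂ := fun t => hnotL₂ _ (hp₂ t)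
  obtain ⟨g₁, hg₁c, hg₁e⟩ := alex_log_of_path hL₁cpt hyL₁ p₁ hp₁'
  obtain ⟨g₂, hg₂c, hg₂e⟩ := alex_log_of_path hL₂cpt hyL₂ p₂ hp₂'
  obtain ⟨g, hgc, hgE₁, hgE₂⟩ := alex_glue hL₁cpt.isClosed hL₂cpt.isClosed hdisjL hg₁c hg₂c
  have hglog : ∀ z ∈ L₁ ∪ L₂, exp (g z) = (z - 0)/(z - y) := by
    intro z hz
    rcases hz with h | h
    · rw [hgE₁ h, hg₁e z h]
    · rw [hgE₂ h, hg₂e z h]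
  have h0L : (0:ℂ) ∉ L₁ ∪ L₂ := fun h => h.elim h0L₁ h0L₂
  have hyL : y ∉ L₁ ∪ L₂ := fun h => h.elim hyL₁ hyL₂
  have hLcpt : IsCompact (L₁ ∪ L₂) := hL₁cpt.union hL₂cpt
  have hjoin := alex_joined_of_log hLcpt h0L hyL hgc hglog
  have hfold0 : alexFold 0 = 0 := alexFold_of_le (by simp)
  have hfoldy : alexFold y = y := alexFold_of_le (mem_closedBall_zero_iff.mp hyD.1)
  have hmapsfold : Set.MapsTo alexFold (L₁ ∪ L₂)ᶜ (Metric.closedBall 0 1 \ K) := by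
    intro z hz
    rcases le_or_gt ‖z‖ 1 with hle | hgt
    · rw [alexFold_of_le hle]
      refine ⟨mem_closedBall_zero_iff.mpr hle, ?_⟩
      intro hzK
      rcases hzK with h | h
      · exact hz (Or.inl (Or.inl h))
      · exact hz (Or.inr (Or.inl h))
    · rw [alexFold_of_gt hgt]
      have h0' : (0:ℝ) < ‖z‖ := by linarith
      constructor
      · rw [mem_closedBall_zero_iff, alexInv_norm]
        have hinv : ‖z‖⁻¹ * ‖z‖ = 1 := inv_mul_cancel₀ h0'.ne'
        nlinarith [inv_nonneg.mpr h0'.le]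
      · intro hzK
        rcases hzK with h | h
        · exact hz (Or.inl (Or.inr ⟨alexInv z, h, alexInv_invol z⟩))
        · exact hz (Or.inr (Or.inr ⟨alexInv z, h, alexInv_invol z⟩))
  have hfin := hjoin.image_continuousOn alexFold_continuous.continuousOn hmapsfold
  rwa [hfold0, hfoldy] at hfin

/-- Möbius automorphism of the unit disc. -/
noncomputable def alexMoeb (a z : ℂ) : ℂ := (z - a) / (1 - (starRingEnd ℂ) a * z)

lemma alexMoeb_denom_ne {a z : ℂ} (ha : ‖a‖ < 1) (hz : ‖z‖ ≤ 1) :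
    1 - (starRingEnd ℂ) a * z ≠ 0 := by
  intro h
  rw [sub_eq_zero] at h
  have : (1:ℝ) = ‖(starRingEnd ℂ) a * z‖ := by rw [← h]; simp
  rw [norm_mul] at this
  have hca : ‖(starRingEnd ℂ) a‖ = ‖a‖ := by
    rw [Complex.norm_conj]
  rw [hca] at this
  nlinarith [norm_nonneg a, norm_nonneg z]

lemma alexMoeb_key (a z : ℂ) :
    Complex.normSq (z - a) =
      Complex.normSq (1 - (starRingEnd ℂ) a * z)
        - (1 - Complex.normSq a) * (1 - Complex.normSq z) := by
  have h : ((z - a) * (starRingEnd ℂ) (z - a) : ℂ) =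
      (1 - (starRingEnd ℂ) a * z) * (starRingEnd ℂ) (1 - (starRingEnd ℂ) a * z)
        - (1 - a * (starRingEnd ℂ) a) * (1 - z * (starRingEnd ℂ) z) := by
    simp only [map_sub, map_mul, map_one, Complex.conj_conj]
    ring
  rw [Complex.mul_conj, Complex.mul_conj, Complex.mul_conj, Complex.mul_conj] at h
  exact_mod_cast h

lemma alexMoeb_norm_le {a z : ℂ} (ha : ‖a‖ < 1) (hz : ‖z‖ ≤ 1) : ‖alexMoeb a z‖ ≤ 1 := by
  have hd := alexMoeb_denom_ne ha hz
  rw [alexMoeb, norm_div, div_le_one (norm_pos_iff.mpr hd)]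
  have hkey := alexMoeb_key a z
  have hnsa : Complex.normSq a < 1 := by
    rw [Complex.normSq_eq_norm_sq]; nlinarith [norm_nonneg a]
  have hnsz : Complex.normSq z ≤ 1 := by
    rw [Complex.normSq_eq_norm_sq]; nlinarith [norm_nonneg z]
  have hle : Complex.normSq (z - a) ≤ Complex.normSq (1 - (starRingEnd ℂ) a * z) := by
    nlinarith
  calc ‖z - a‖ = Real.sqrt (Complex.normSq (z - a)) := by
        rw [Complex.norm_def]
    _ ≤ Real.sqrt (Complex.normSq (1 - (starRingEnd ℂ) a * z)) := Real.sqrt_le_sqrt hle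
    _ = ‖1 - (starRingEnd ℂ) a * z‖ := by rw [Complex.norm_def]

lemma alexMoeb_norm_lt {a z : ℂ} (ha : ‖a‖ < 1) (hz : ‖z‖ < 1) : ‖alexMoeb a z‖ < 1 := by
  have hd := alexMoeb_denom_ne ha hz.le
  rw [alexMoeb, norm_div, div_lt_one (norm_pos_iff.mpr hd)]
  have hkey := alexMoeb_key a z
  have hnsa : Complex.normSq a < 1 := by
    rw [Complex.normSq_eq_norm_sq]; nlinarith [norm_nonneg a]
  have hnsz : Complex.normSq z < 1 := by
    rw [Complex.normSq_eq_norm_sq]; nlinarith [norm_nonneg z]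
  have hlt : Complex.normSq (z - a) < Complex.normSq (1 - (starRingEnd ℂ) a * z) := by
    nlinarith
  calc ‖z - a‖ = Real.sqrt (Complex.normSq (z - a)) := by
        rw [Complex.norm_def]
    _ < Real.sqrt (Complex.normSq (1 - (starRingEnd ℂ) a * z)) :=
        Real.sqrt_lt_sqrt (Complex.normSq_nonneg _) hlt
    _ = ‖1 - (starRingEnd ℂ) a * z‖ := by rw [Complex.norm_def]

lemma alexMoeb_inv {a z : ℂ} (ha : ‖a‖ < 1) (hz : ‖z‖ ≤ 1) :
    alexMoeb (-a) (alexMoeb a z) = z := by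
  have hd1 : 1 - (starRingEnd ℂ) a * z ≠ 0 := alexMoeb_denom_ne ha hz
  have hnsa : Complex.normSq a < 1 := by
    rw [Complex.normSq_eq_norm_sq]; nlinarith [norm_nonneg a]
  have hd3 : (1:ℂ) - (starRingEnd ℂ) a * a ≠ 0 := by
    rw [mul_comm, Complex.mul_conj]
    intro h
    rw [sub_eq_zero] at h
    have : Complex.normSq a = 1 := by exact_mod_cast h.symm
    linarith
  have hd2 : 1 - (starRingEnd ℂ) (-a) * (alexMoeb a z) =
      (1 - (starRingEnd ℂ) a * a) / (1 - (starRingEnd ℂ) a * z) := by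
    rw [alexMoeb, map_neg, neg_mul]
    field_simp
    ring
  rw [alexMoeb, hd2, alexMoeb]
  rw [div_div_eq_mul_div, sub_neg_eq_add]
  have hd1' : 1 - z * (starRingEnd ℂ) a ≠ 0 := by rw [mul_comm]; exact hd1
  have hd3' : 1 - a * (starRingEnd ℂ) a ≠ 0 := by rw [mul_comm]; exact hd3
  field_simp
  ring

lemma alexMoeb_continuousOn {a : ℂ} (ha : ‖a‖ < 1) :
    ContinuousOn (alexMoeb a) (Metric.closedBall 0 1) := by
  apply ContinuousOn.div
  · exact (continuous_id.sub continuous_const).continuousOn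
  · exact (continuous_const.sub (continuous_const.mul continuous_id)).continuousOn
  · intro z hz
    exact alexMoeb_denom_ne ha (mem_closedBall_zero_iff.mp hz)

lemma alexMoeb_self (a : ℂ) : alexMoeb a a = 0 := by
  rw [alexMoeb, sub_self, zero_div]

/-- Move a point of the disc slightly inward, staying joined within all relevant sets. -/
lemma alex_move_inward {K : Set ℂ} (hKc : IsClosed K) {v : ℂ}
    (hv : v ∈ Metric.closedBall 0 1 \ K) :
    ∃ v' ∈ Metric.ball 0 1 \ K, ∀ L : Set ℂ, L ⊆ K →
      JoinedIn (Metric.closedBall 0 1 \ L) v v' := by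
  obtain ⟨ε, hε0, hεball⟩ := Metric.isOpen_iff.mp hKc.isOpen_compl v hv.2
  set δ : ℝ := min (ε/2) (1/2) with hδ
  have hδ0 : 0 < δ := lt_min (by linarith) (by norm_num)
  have hδ1 : δ ≤ 1/2 := min_le_right _ _
  have hδε : δ < ε := lt_of_le_of_lt (min_le_left _ _) (by linarith)
  have hv1 : ‖v‖ ≤ 1 := mem_closedBall_zero_iff.mp hv.1
  set v' : ℂ := ((1 - δ : ℝ) : ℂ) * v with hv'
  have hseg : ∀ t : ℝ, 0 ≤ t → t ≤ 1 → ((1 - δ*t : ℝ) : ℂ) * v ∈ Metric.closedBall 0 1 \ K := by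
    intro t h0 h1
    have hc0 : 0 ≤ 1 - δ*t := by nlinarith
    have hc1 : 1 - δ*t ≤ 1 := by nlinarith
    constructor
    · rw [mem_closedBall_zero_iff, norm_mul, Complex.norm_real, Real.norm_eq_abs,
        _root_.abs_of_nonneg hc0]
      nlinarith [norm_nonneg v]
    · intro hK'
      apply hεball _ hK'
      rw [Metric.mem_ball, dist_eq_norm]
      have : ((1 - δ*t : ℝ) : ℂ) * v - v = ((-(δ*t) : ℝ) : ℂ) * v := by
        push_cast; ring
      rw [this, norm_mul, Complex.norm_real, Real.norm_eq_abs, abs_neg,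
        _root_.abs_of_nonneg (by nlinarith)]
      calc δ * t * ‖v‖ ≤ δ * 1 * 1 := by nlinarith [norm_nonneg v]
        _ = δ := by ring
        _ < ε := hδε
  have hv'eq : v' = ((1 - δ*1 : ℝ) : ℂ) * v := by rw [hv']; norm_num
  have hv'mem : v' ∈ Metric.ball 0 1 \ K := by
    constructor
    · rw [mem_ball_zero_iff, hv', norm_mul, Complex.norm_real, Real.norm_eq_abs,
        _root_.abs_of_nonneg (by linarith : (0:ℝ) ≤ 1 - δ)]
      nlinarith [norm_nonneg v]
    · rw [hv'eq]
      exact (hseg 1 zero_le_one le_rfl).2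
  refine ⟨v', hv'mem, ?_⟩
  intro L hLK
  have hcont : Continuous fun t : unitInterval => ((1 - δ*(t:ℝ) : ℝ) : ℂ) * v := by
    apply Continuous.mul _ continuous_const
    exact Complex.continuous_ofReal.comp
      (continuous_const.sub (continuous_const.mul continuous_subtype_val))
  refine ⟨⟨⟨fun t => ((1 - δ*(t:ℝ) : ℝ) : ℂ) * v, hcont⟩, ?_, ?_⟩, ?_⟩
  · show ((1 - δ*((0:ℝ)) : ℝ) : ℂ) * v = v
    norm_num
  · show ((1 - δ*((1:ℝ)) : ℝ) : ℂ) * v = v'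
    rw [hv'eq]
  · intro t
    have h := hseg (t:ℝ) t.2.1 t.2.2
    exact ⟨h.1, fun hmem => h.2 (hLK hmem)⟩

/-- Alexander's lemma for the closed unit disc in `ℂ`. -/
lemma alexC {K₁ K₂ : Set ℂ} (hK₁c : IsClosed K₁) (hK₂c : IsClosed K₂)
    (hK₁D : K₁ ⊆ Metric.closedBall 0 1) (hK₂D : K₂ ⊆ Metric.closedBall 0 1)
    (hd : Disjoint K₁ K₂) {x y : ℂ}
    (hx : x ∈ Metric.closedBall 0 1 \ (K₁ ∪ K₂))
    (hy : y ∈ Metric.closedBall 0 1 \ (K₁ ∪ K₂))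
    (h₁ : JoinedIn (Metric.closedBall 0 1 \ K₁) x y)
    (h₂ : JoinedIn (Metric.closedBall 0 1 \ K₂) x y) :
    JoinedIn (Metric.closedBall 0 1 \ (K₁ ∪ K₂)) x y := by
  have hKc : IsClosed (K₁ ∪ K₂) := hK₁c.union hK₂c
  have hK₁cpt : IsCompact K₁ :=
    Metric.isCompact_of_isClosed_isBounded hK₁c
      (Metric.isBounded_closedBall.subset hK₁D)
  have hK₂cpt : IsCompact K₂ :=
    Metric.isCompact_of_isClosed_isBounded hK₂c
      (Metric.isBounded_closedBall.subset hK₂D)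
  obtain ⟨x', hx'mem, hx'join⟩ := alex_move_inward hKc hx
  obtain ⟨y', hy'mem, hy'join⟩ := alex_move_inward hKc hy
  have hj₁ : JoinedIn (Metric.closedBall 0 1 \ K₁) x' y' :=
    ((hx'join K₁ Set.subset_union_left).symm.trans h₁).trans
      (hy'join K₁ Set.subset_union_left)
  have hj₂ : JoinedIn (Metric.closedBall 0 1 \ K₂) x' y' :=
    ((hx'join K₂ Set.subset_union_right).symm.trans h₂).trans
      (hy'join K₂ Set.subset_union_right)
  have hax : ‖x'‖ < 1 := mem_ball_zero_iff.mp hx'mem.1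
  have hax' : ‖-x'‖ < 1 := by rwa [norm_neg]
  set φ : ℂ → ℂ := alexMoeb x' with hφ
  set ψ : ℂ → ℂ := alexMoeb (-x') with hψ
  have hψφ : ∀ z, ‖z‖ ≤ 1 → ψ (φ z) = z := fun z hz => alexMoeb_inv hax hz
  have hφψ : ∀ z, ‖z‖ ≤ 1 → φ (ψ z) = z := by
    intro z hz
    have := alexMoeb_inv (a := -x') hax' hz
    rwa [neg_neg] at this
  have hφD : Set.MapsTo φ (Metric.closedBall 0 1) (Metric.closedBall 0 1) := fun z hz =>
    mem_closedBall_zero_iff.mpr (alexMoeb_norm_le hax (mem_closedBall_zero_iff.mp hz))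
  have hψD : Set.MapsTo ψ (Metric.closedBall 0 1) (Metric.closedBall 0 1) := fun z hz =>
    mem_closedBall_zero_iff.mpr (alexMoeb_norm_le hax' (mem_closedBall_zero_iff.mp hz))
  have hφinj : ∀ z ∈ Metric.closedBall 0 1, ∀ w ∈ Metric.closedBall 0 1,
      φ z = φ w → z = w := by
    intro z hz w hw h
    have := congrArg ψ h
    rwa [hψφ z (mem_closedBall_zero_iff.mp hz), hψφ w (mem_closedBall_zero_iff.mp hw)] at this
  set M₁ : Set ℂ := φ '' K₁ with hM₁
  set M₂ : Set ℂ := φ '' K₂ with hM₂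
  have hM₁cpt : IsCompact M₁ :=
    hK₁cpt.image_of_continuousOn ((alexMoeb_continuousOn hax).mono hK₁D)
  have hM₂cpt : IsCompact M₂ :=
    hK₂cpt.image_of_continuousOn ((alexMoeb_continuousOn hax).mono hK₂D)
  have hM₁D : M₁ ⊆ Metric.closedBall 0 1 := by
    rintro _ ⟨k, hk, rfl⟩; exact hφD (hK₁D hk)
  have hM₂D : M₂ ⊆ Metric.closedBall 0 1 := by
    rintro _ ⟨k, hk, rfl⟩; exact hφD (hK₂D hk)
  have hdM : Disjoint M₁ M₂ := by
    rw [Set.disjoint_left]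
    rintro _ ⟨k₁, hk₁, rfl⟩ ⟨k₂, hk₂, hk₂z⟩
    have : k₂ = k₁ := hφinj k₂ (hK₂D hk₂) k₁ (hK₁D hk₁) hk₂z
    exact Set.disjoint_left.mp hd hk₁ (this ▸ hk₂)
  have hφx' : φ x' = 0 := alexMoeb_self x'
  have hx'D : x' ∈ Metric.closedBall 0 1 := Metric.ball_subset_closedBall hx'mem.1
  have hy'D : y' ∈ Metric.closedBall 0 1 := Metric.ball_subset_closedBall hy'mem.1
  have h0M : (0:ℂ) ∉ M₁ ∪ M₂ := by
    rintro (⟨k, hk, hkz⟩ | ⟨k, hk, hkz⟩)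
    · have : k = x' := hφinj k (hK₁D hk) x' hx'D (by rw [hkz, hφx'])
      exact hx'mem.2 (Or.inl (this ▸ hk))
    · have : k = x' := hφinj k (hK₂D hk) x' hx'D (by rw [hkz, hφx'])
      exact hx'mem.2 (Or.inr (this ▸ hk))
  have hyM : φ y' ∈ Metric.closedBall 0 1 \ (M₁ ∪ M₂) := by
    refine ⟨hφD hy'D, ?_⟩
    rintro (⟨k, hk, hkz⟩ | ⟨k, hk, hkz⟩)
    · have : k = y' := hφinj k (hK₁D hk) y' hy'D hkz
      exact hy'mem.2 (Or.inl (this ▸ hk))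
    · have : k = y' := hφinj k (hK₂D hk) y' hy'D hkz
      exact hy'mem.2 (Or.inr (this ▸ hk))
  have hmap₁ : Set.MapsTo φ (Metric.closedBall 0 1 \ K₁) (Metric.closedBall 0 1 \ M₁) := by
    intro z hz
    refine ⟨hφD hz.1, ?_⟩
    rintro ⟨k, hk, hkz⟩
    have : k = z := hφinj k (hK₁D hk) z hz.1 hkz
    exact hz.2 (this ▸ hk)
  have hmap₂ : Set.MapsTo φ (Metric.closedBall 0 1 \ K₂) (Metric.closedBall 0 1 \ M₂) := by
    intro z hz
    refine ⟨hφD hz.1, ?_⟩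
    rintro ⟨k, hk, hkz⟩
    have : k = z := hφinj k (hK₂D hk) z hz.1 hkz
    exact hz.2 (this ▸ hk)
  have hj₁' := hj₁.image_continuousOn ((alexMoeb_continuousOn hax).mono Set.diff_subset) hmap₁
  have hj₂' := hj₂.image_continuousOn ((alexMoeb_continuousOn hax).mono Set.diff_subset) hmap₂
  rw [← hφ] at hj₁' hj₂'
  rw [hφx'] at hj₁' hj₂'
  have hmid := alex_centered hM₁cpt hM₂cpt hM₁D hM₂D hdM h0M hyM hj₁' hj₂'
  have hmapψ : Set.MapsTo ψ (Metric.closedBall 0 1 \ (M₁ ∪ M₂))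
      (Metric.closedBall 0 1 \ (K₁ ∪ K₂)) := by
    intro z hz
    refine ⟨hψD hz.1, ?_⟩
    intro hzK
    have hz1 : ‖z‖ ≤ 1 := mem_closedBall_zero_iff.mp hz.1
    rcases hzK with h | h
    · exact hz.2 (Or.inl ⟨ψ z, h, hφψ z hz1⟩)
    · exact hz.2 (Or.inr ⟨ψ z, h, hφψ z hz1⟩)
  have hmid' := hmid.image_continuousOn ((alexMoeb_continuousOn hax').mono Set.diff_subset) hmapψ
  have hψ0 : ψ 0 = x' := by
    rw [← hφx']; exact hψφ x' (mem_closedBall_zero_iff.mp hx'D)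
  have hψy : ψ (φ y') = y' := hψφ y' (mem_closedBall_zero_iff.mp hy'D)
  rw [← hψ] at hmid'
  rw [hψ0, hψy] at hmid'
  exact (hx'join (K₁ ∪ K₂) subset_rfl).trans
    (hmid'.trans (hy'join (K₁ ∪ K₂) subset_rfl).symm)

end AlexanderAux

/-- Alexander's lemma for the closed unit disc `D² ⊆ ℝ²`: if disjoint closed sets
`K₁, K₂ ⊆ D²` each fail to separate `x` from `y` in `D²`, then their union does not
separate `x` from `y` in `D²`. -/
theorem alexander_lemma_closed_disc
    (K₁ K₂ : Set (EuclideanSpace ℝ (Fin 2)))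
    (hK₁c : IsClosed K₁) (hK₂c : IsClosed K₂)
    (hK₁D : K₁ ⊆ Metric.closedBall 0 1) (hK₂D : K₂ ⊆ Metric.closedBall 0 1)
    (hd : Disjoint K₁ K₂)
    (x y : EuclideanSpace ℝ (Fin 2))
    (hx : x ∈ Metric.closedBall 0 1 \ (K₁ ∪ K₂))
    (hy : y ∈ Metric.closedBall 0 1 \ (K₁ ∪ K₂))
    (h₁ : JoinedIn (Metric.closedBall 0 1 \ K₁) x y)
    (h₂ : JoinedIn (Metric.closedBall 0 1 \ K₂) x y) :
    JoinedIn (Metric.closedBall 0 1 \ (K₁ ∪ K₂)) x y := by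
  set e : ℂ ≃ₗᵢ[ℝ] EuclideanSpace ℝ (Fin 2) := Complex.orthonormalBasisOneI.repr with he
  set f : EuclideanSpace ℝ (Fin 2) → ℂ := ⇑e.symm with hf
  have hfnorm : ∀ v, ‖f v‖ = ‖v‖ := fun v => e.symm.norm_map v
  have henorm : ∀ z : ℂ, ‖e z‖ = ‖z‖ := fun z => e.norm_map z
  have hfinj : Function.Injective f := e.symm.injective
  have hfc : Continuous f := e.symm.continuous
  have hec : Continuous (e : ℂ → EuclideanSpace ℝ (Fin 2)) := e.continuous
  set M₁ : Set ℂ := f '' K₁ with hM₁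
  set M₂ : Set ℂ := f '' K₂ with hM₂
  have hM₁c : IsClosed M₁ := (e.symm.toHomeomorph.isClosedMap) _ hK₁c
  have hM₂c : IsClosed M₂ := (e.symm.toHomeomorph.isClosedMap) _ hK₂c
  have hM₁D : M₁ ⊆ Metric.closedBall 0 1 := by
    rintro _ ⟨k, hk, rfl⟩
    rw [mem_closedBall_zero_iff, hfnorm]
    exact mem_closedBall_zero_iff.mp (hK₁D hk)
  have hM₂D : M₂ ⊆ Metric.closedBall 0 1 := by
    rintro _ ⟨k, hk, rfl⟩
    rw [mem_closedBall_zero_iff, hfnorm]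
    exact mem_closedBall_zero_iff.mp (hK₂D hk)
  have hdM : Disjoint M₁ M₂ := Set.disjoint_image_of_injective hfinj hd
  have hmem : ∀ v ∈ Metric.closedBall (0 : EuclideanSpace ℝ (Fin 2)) 1 \ (K₁ ∪ K₂),
      f v ∈ Metric.closedBall (0:ℂ) 1 \ (M₁ ∪ M₂) := by
    intro v hv
    refine ⟨by rw [mem_closedBall_zero_iff, hfnorm]; exact mem_closedBall_zero_iff.mp hv.1, ?_⟩
    rintro (⟨k, hk, hkv⟩ | ⟨k, hk, hkv⟩)
    · exact hv.2 (Or.inl (hfinj hkv ▸ hk))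
    · exact hv.2 (Or.inr (hfinj hkv ▸ hk))
  have hmap₁ : Set.MapsTo f (Metric.closedBall 0 1 \ K₁) (Metric.closedBall 0 1 \ M₁) := by
    intro v hv
    refine ⟨by rw [mem_closedBall_zero_iff, hfnorm]; exact mem_closedBall_zero_iff.mp hv.1, ?_⟩
    rintro ⟨k, hk, hkv⟩
    exact hv.2 (hfinj hkv ▸ hk)
  have hmap₂ : Set.MapsTo f (Metric.closedBall 0 1 \ K₂) (Metric.closedBall 0 1 \ M₂) := by
    intro v hv
    refine ⟨by rw [mem_closedBall_zero_iff, hfnorm]; exact mem_closedBall_zero_iff.mp hv.1, ?_⟩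
    rintro ⟨k, hk, hkv⟩
    exact hv.2 (hfinj hkv ▸ hk)
  have h₁' := h₁.image_continuousOn hfc.continuousOn hmap₁
  have h₂' := h₂.image_continuousOn hfc.continuousOn hmap₂
  have hmid := alexC hM₁c hM₂c hM₁D hM₂D hdM (hmem x hx) (hmem y hy) h₁' h₂'
  have hmapback : Set.MapsTo (e : ℂ → EuclideanSpace ℝ (Fin 2))
      (Metric.closedBall 0 1 \ (M₁ ∪ M₂)) (Metric.closedBall 0 1 \ (K₁ ∪ K₂)) := by
    intro z hz
    refine ⟨by rw [mem_closedBall_zero_iff, henorm]; exact mem_closedBall_zero_iff.mp hz.1, ?_⟩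
    intro hzK
    rcases hzK with h | h
    · exact hz.2 (Or.inl ⟨e z, h, e.symm_apply_apply z⟩)
    · exact hz.2 (Or.inr ⟨e z, h, e.symm_apply_apply z⟩)
  have hfin := hmid.image_continuousOn hec.continuousOn hmapback
  have hex : ∀ v : EuclideanSpace ℝ (Fin 2), e (f v) = v := fun v => e.apply_symm_apply v
  rw [hex x, hex y] at hfin
  exact hfin
end

section
/- (Effros' theorem, metric version.) Let X be a compact metric space which is homogeneous. Then for every ε > 0 and every x ∈ X, the set W(x, ε) of all y ∈ X such that there exists a homeomorphism h : X → X with h(x) = y and d(h(t), t) < ε for all t ∈ X, is an open subset of X. -/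
open Set Topology Filter TopologicalSpace


section MeagreHelpers
variable {Y : Type*} [TopologicalSpace Y]
variable {Y : Type*} [TopologicalSpace Y]

lemma IsMeagre.union' {s t : Set Y} (hs : IsMeagre s) (ht : IsMeagre t) :
    IsMeagre (s ∪ t) := by
  rw [IsMeagre, compl_union]
  exact Filter.inter_mem hs ht

lemma isMeagre_iUnion' {ι : Sort*} [Countable ι] {s : ι → Set Y} (hs : ∀ i, IsMeagre (s i)) :
    IsMeagre (⋃ i, s i) := by
  rw [IsMeagre, compl_iUnion]
  exact (countable_iInter_mem).mpr hs

lemma IsOpen.not_isMeagre [BaireSpace Y] {O : Set Y} (hO : IsOpen O) (hne : O.Nonempty) :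
    ¬ IsMeagre O := by
  intro h
  have : Dense Oᶜ := dense_of_mem_residual h
  obtain ⟨y, hy⟩ := hne
  have := this.inter_open_nonempty O hO ⟨y, hy⟩
  simp at this

lemma IsClosed.nonempty_interior_of_not_isMeagre {C : Set Y} (hC : IsClosed C)
    (h : ¬ IsMeagre C) : (interior C).Nonempty := by
  by_contra hne
  apply h
  rw [isMeagre_iff_countable_union_isNowhereDense]
  exact ⟨{C}, by simpa using hC.isNowhereDense_iff.2 (not_nonempty_iff_eq_empty.1 hne),
    countable_singleton _, by simp⟩
end MeagreHelpers

section Dop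
variable {Y : Type*} [TopologicalSpace Y]

/-- Points near which `S` is non-meager. -/
def Dop (S : Set Y) : Set Y := {x | ∀ U : Set Y, IsOpen U → x ∈ U → ¬ IsMeagre (S ∩ U)}

lemma isClosed_Dop (S : Set Y) : IsClosed (Dop S) := by
  rw [← isOpen_compl_iff]
  rw [isOpen_iff_forall_mem_open]
  rintro x hx
  simp only [Dop, mem_compl_iff, mem_setOf_eq, not_forall] at hx
  obtain ⟨U, hU, hxU, hm⟩ := hx
  push_neg at hm
  refine ⟨U, fun y hy hyD => ?_, hU, hxU⟩
  exact hyD U hU hy hm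

lemma Dop_subset_closure (S : Set Y) : Dop S ⊆ closure S := by
  intro x hx
  rw [mem_closure_iff]
  intro U hU hxU
  rcases (S ∩ U).eq_empty_or_nonempty with h | h
  · exact absurd (h ▸ IsMeagre.empty) (hx U hU hxU)
  · obtain ⟨y, hy⟩ := h; exact ⟨y, hy.2, hy.1⟩

lemma isMeagre_diff_Dop [SecondCountableTopology Y] (S : Set Y) : IsMeagre (S \ Dop S) := by
  have hB := isBasis_countableBasis Y
  have : S \ Dop S ⊆ ⋃ B ∈ {B ∈ countableBasis Y | IsMeagre (S ∩ B)}, (S ∩ B) := by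
    intro x hx
    simp only [Dop, mem_diff, mem_setOf_eq, not_forall] at hx
    obtain ⟨hxS, U, hU, hxU, hm⟩ := hx
    push_neg at hm
    obtain ⟨B, hBmem, hxB, hBU⟩ := hB.exists_subset_of_mem_open hxU hU
    exact mem_biUnion ⟨hBmem, hm.mono (inter_subset_inter_right _ hBU)⟩ ⟨hxS, hxB⟩
  refine (IsMeagre.mono this ?_)
  have hc : {B ∈ countableBasis Y | IsMeagre (S ∩ B)}.Countable :=
    (countable_countableBasis Y).mono (sep_subset _ _)
  have := hc.to_subtype
  rw [biUnion_eq_iUnion]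
  exact isMeagre_iUnion' fun i => i.2.2

end Dop


lemma IsOpen.not_isMeagre' {Y : Type*} [TopologicalSpace Y] [BaireSpace Y] {O : Set Y}
    (hO : IsOpen O) (hne : O.Nonempty) : ¬ IsMeagre O := by
  intro h
  have : Dense Oᶜ := dense_of_mem_residual h
  obtain ⟨y, hy⟩ := hne
  have := this.inter_open_nonempty O hO ⟨y, hy⟩
  simp at this

/-- A non-meager Baire measurable set is comeager in some nonempty open set. -/
lemma BaireMeasurableSet.exists_isOpen_comeager {Y : Type*} [TopologicalSpace Y] [BaireSpace Y]
    {Z : Set Y} (hZ : BaireMeasurableSet Z) (hnm : ¬ IsMeagre Z) :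
    ∃ O : Set Y, IsOpen O ∧ O.Nonempty ∧ IsMeagre (O \ Z) := by
  obtain ⟨u, hu, heq⟩ := hZ.residualEq_isOpen
  have h1 : IsMeagre (Z \ u) := by
    rw [IsMeagre]
    filter_upwards [heq] with y hy
    simp only [mem_compl_iff, mem_diff, not_and, not_not]
    intro hyZ
    have : (y ∈ Z) = (y ∈ u) := hy
    rwa [← this]
  have h2 : IsMeagre (u \ Z) := by
    rw [IsMeagre]
    filter_upwards [heq] with y hy
    simp only [mem_compl_iff, mem_diff, not_and, not_not]
    intro hyu
    have : (y ∈ Z) = (y ∈ u) := hy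
    rwa [this]
  rcases u.eq_empty_or_nonempty with rfl | hne
  · exact absurd (by simpa using h1) hnm
  · exact ⟨u, hu, hne, h2⟩


section Chain
variable {P : Type*} [MetricSpace P]

/-- The center chain used in the Souslin scheme. -/
noncomputable def chainC (p : ℕ → P) (σ : ℕ → ℕ) : ℕ → P
  | 0 => p (σ 0)
  | k+1 => if dist (p (σ (k+1))) (chainC p σ k) ≤ 2/2^k then p (σ (k+1)) else chainC p σ k

lemma chainC_dist (p : ℕ → P) (σ : ℕ → ℕ) (k : ℕ) :
    dist (chainC p σ k) (chainC p σ (k+1)) ≤ 4/2/2^k := by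
  have : (4:ℝ)/2/2^k = 2/2^k := by ring
  rw [this, chainC]
  split
  · rwa [dist_comm]
  · simp [dist_self]; positivity

lemma chainC_congr (p : ℕ → P) {σ τ : ℕ → ℕ} {k : ℕ} (h : ∀ i, i ≤ k → σ i = τ i) :
    chainC p σ k = chainC p τ k := by
  induction k with
  | zero => simp [chainC, h 0 le_rfl]
  | succ k ih =>
      have hk := ih (fun i hi => h i (hi.trans k.le_succ))
      rw [chainC, chainC, hk, h (k+1) le_rfl]

lemma chainC_cauchy [CompleteSpace P] (p : ℕ → P) (σ : ℕ → ℕ) : CauchySeq (chainC p σ) :=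
  cauchySeq_of_le_geometric_two (chainC_dist p σ)

/-- Limit of the center chain. -/
noncomputable def chainLim [CompleteSpace P] (p : ℕ → P) (σ : ℕ → ℕ) : P :=
  (cauchySeq_tendsto_of_complete (chainC_cauchy p σ)).choose

lemma chainLim_spec [CompleteSpace P] (p : ℕ → P) (σ : ℕ → ℕ) :
    Tendsto (chainC p σ) atTop (nhds (chainLim p σ)) :=
  (cauchySeq_tendsto_of_complete (chainC_cauchy p σ)).choose_spec

lemma dist_chainC_chainLim [CompleteSpace P] (p : ℕ → P) (σ : ℕ → ℕ) (k : ℕ) :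
    dist (chainC p σ k) (chainLim p σ) ≤ 4/2^k :=
  dist_le_of_le_geometric_two_of_tendsto (chainC_dist p σ) (chainLim_spec p σ) k

lemma chainLim_surjective [CompleteSpace P] {p : ℕ → P} (hp : DenseRange p) :
    Function.Surjective (chainLim p) := by
  intro q
  have h : ∀ k : ℕ, ∃ n, dist (p n) q < 1/2/2^k := by
    intro k
    have := Metric.denseRange_iff.1 hp q (1/2/2^k) (by positivity)
    simpa [dist_comm] using this
  choose σ hσ using h
  have hc : ∀ k, chainC p σ k = p (σ k) := by
    intro k
    induction k with
    | zero => rfl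
    | succ k ih =>
        rw [chainC, ih, if_pos]
        calc dist (p (σ (k+1))) (p (σ k)) ≤ dist (p (σ (k+1))) q + dist (p (σ k)) q := by
              rw [dist_comm (p (σ k)) q]; exact dist_triangle _ _ _
          _ ≤ 1/2/2^(k+1) + 1/2/2^k := by
              exact add_le_add (hσ (k+1)).le (hσ k).le
          _ ≤ 2/2^k := by
              rw [pow_succ]; ring_nf
              gcongr
              norm_num
  refine ⟨σ, tendsto_nhds_unique (chainLim_spec p σ) ?_⟩
  have : Tendsto (fun k => p (σ k)) atTop (nhds q) := by
    rw [tendsto_iff_dist_tendsto_zero]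
    refine squeeze_zero (fun k => dist_nonneg) (fun k => (hσ k).le) ?_
    have : Tendsto (fun k:ℕ => (1:ℝ)/2/2^k) atTop (nhds 0) := by
      simpa using tendsto_const_nhds.div_atTop (tendsto_pow_atTop_atTop_of_one_lt (show (1:ℝ) < 2 by norm_num))
    simpa using this
  exact this.congr (fun k => (hc k).symm)

end Chain


/-- first `k` values of `σ` as a list -/
def preL (σ : ℕ → ℕ) (k : ℕ) : List ℕ := (List.range k).map σ

lemma preL_length (σ : ℕ → ℕ) (k : ℕ) : (preL σ k).length = k := by simp [preL]

lemma preL_succ (σ : ℕ → ℕ) (k : ℕ) : preL σ (k+1) = preL σ k ++ [σ k] := by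
  simp [preL, List.range_succ]

lemma preL_getD (σ : ℕ → ℕ) {i k : ℕ} (h : i < k) : (preL σ k).getD i 0 = σ i := by
  rw [List.getD_eq_getElem _ _ (by simpa [preL_length])]
  simp [preL]

lemma concat_inj {s t : List ℕ} {a b : ℕ} (h : s ++ [a] = t ++ [b]) : s = t ∧ a = b := by
  have hl : s.length = t.length := by
    have := congrArg List.length h
    simpa using this
  constructor
  · have := congrArg (fun l => List.take s.length l) h
    simpa [List.take_left, hl, List.take_left'] using this
  · have := congrArg (fun l => l.getLast?) h
    simpa using this


section AS
variable {P : Type*} [MetricSpace P] [CompleteSpace P]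
variable {Y : Type*} [MetricSpace Y]

/-- Souslin scheme sets associated to `θ` and dense sequence `p`. -/
noncomputable def AS (p : ℕ → P) (θ : P → Y) (s : List ℕ) : Set Y :=
  θ '' (chainLim p '' {σ : ℕ → ℕ | preL σ s.length = s})

lemma AS_nil {p : ℕ → P} (hp : DenseRange p) (θ : P → Y) : AS p θ [] = range θ := by
  have h1 : {σ : ℕ → ℕ | preL σ 0 = []} = univ := by
    ext σ; simp [preL]
  rw [AS]
  simp only [List.length_nil, h1, image_univ]
  rw [(chainLim_surjective hp).range_eq, image_univ]

lemma AS_eq_iUnion (p : ℕ → P) (θ : P → Y) (s : List ℕ) :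
    AS p θ s = ⋃ n, AS p θ (s ++ [n]) := by
  simp only [AS]
  ext y
  simp only [mem_iUnion, mem_image]
  constructor
  · rintro ⟨q, ⟨σ, hσ, rfl⟩, rfl⟩
    exact ⟨σ s.length, chainLim p σ, ⟨σ, by
      simp only [mem_setOf_eq, List.length_append, List.length_singleton]
      rw [preL_succ, hσ], rfl⟩, rfl⟩
  · rintro ⟨n, q, ⟨σ, hσ, rfl⟩, rfl⟩
    refine ⟨chainLim p σ, ⟨σ, ?_, rfl⟩, rfl⟩
    simp only [mem_setOf_eq] at hσ ⊢
    rw [List.length_append, List.length_singleton, preL_succ] at hσ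
    exact (concat_inj hσ).1

lemma AS_subset_ball (p : ℕ → P) (θ : P → Y) {s : List ℕ} {k : ℕ} (hs : s.length = k + 1) :
    AS p θ s ⊆ θ '' (Metric.closedBall (chainC p (fun i => s.getD i 0) k) (4/2^k)) := by
  rintro y ⟨q, ⟨σ, hσ, rfl⟩, rfl⟩
  refine ⟨chainLim p σ, ?_, rfl⟩
  rw [Metric.mem_closedBall, dist_comm]
  have hc : chainC p σ k = chainC p (fun i => s.getD i 0) k := by
    apply chainC_congr
    intro i hi
    simp only [mem_setOf_eq] at hσ
    conv_rhs => rw [← hσ]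
    rw [preL_getD σ (by omega)]
  rw [← hc]
  exact dist_chainC_chainLim p σ k
end AS
lemma tendsto_c_div_two_pow (c : ℝ) : Tendsto (fun k:ℕ => c/2^k) atTop (nhds 0) :=
  tendsto_const_nhds.div_atTop (tendsto_pow_atTop_atTop_of_one_lt one_lt_two)

section Key
variable {P : Type*} [MetricSpace P] [CompleteSpace P] [SecondCountableTopology P]
variable {Y : Type*} [MetricSpace Y] [BaireSpace Y] [SecondCountableTopology Y]

/-- Key lemma: the continuous image of a complete separable metric space, if non-meager,
is comeager in some nonempty open set. -/
theorem exists_isOpen_comeager_range (θ : P → Y) (hθ : Continuous θ)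
    (hnm : ¬ IsMeagre (range θ)) :
    ∃ O : Set Y, IsOpen O ∧ O.Nonempty ∧ IsMeagre (O \ range θ) := by
  haveI : Nonempty P := by
    by_contra h
    rw [not_nonempty_iff] at h
    rw [range_eq_empty θ] at hnm
    exact hnm IsMeagre.empty
  set p : ℕ → P := denseSeq P with hpdef
  have hp : DenseRange p := denseRange_denseSeq P
  set A : List ℕ → Set Y := AS p θ with hA
  set B : List ℕ → Set Y := fun s => Dop (A s) \ ⋃ n, Dop (A (s ++ [n])) with hB
  -- each B s is meager
  have hBm : ∀ s, IsMeagre (B s) := by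
    intro s
    by_contra hnmB
    set m : Set Y := ⋃ n, (A (s ++ [n]) \ Dop (A (s ++ [n]))) with hm
    have hmm : IsMeagre m := isMeagre_iUnion' fun n => isMeagre_diff_Dop _
    set Z : Set Y := B s \ m with hZ
    have hZBM : BaireMeasurableSet Z :=
      ((BaireMeasurableSet.of_compl (isClosed_Dop (A s)).isOpen_compl.baireMeasurableSet).diff
        (BaireMeasurableSet.iUnion fun n =>
          BaireMeasurableSet.of_compl (isClosed_Dop (A (s ++ [n]))).isOpen_compl.baireMeasurableSet)).diff
        hmm.baireMeasurableSet
    have hZnm : ¬ IsMeagre Z := by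
      intro h
      exact hnmB ((h.union' hmm).mono (fun y hy => by
        by_cases hym : y ∈ m
        · exact Or.inr hym
        · exact Or.inl ⟨hy, hym⟩))
    obtain ⟨O, hO, hOne, hOZ⟩ := hZBM.exists_isOpen_comeager hZnm
    have hZO : (Z ∩ O).Nonempty := by
      rcases (Z ∩ O).eq_empty_or_nonempty with h | h
      · exfalso
        apply hO.not_isMeagre' hOne
        refine hOZ.mono (show O ⊆ O \ Z from fun y hy => ⟨hy, fun hyZ => ?_⟩)
        exact absurd (mem_inter hyZ hy) (by simp [h])
      · exact h
    obtain ⟨z, hzZ, hzO⟩ := hZO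
    have hzD : z ∈ Dop (A s) := hzZ.1.1
    apply hzD O hO hzO
    -- A s ∩ O is meager since A s ∩ Z = ∅ and O \ Z is meager
    have hAZ : A s ∩ Z = ∅ := by
      rw [eq_empty_iff_forall_notMem]
      rintro y ⟨hyA, hyZ⟩
      rw [show A s = ⋃ n, A (s ++ [n]) from AS_eq_iUnion p θ s] at hyA
      obtain ⟨_, ⟨n, rfl⟩, hyn⟩ := hyA
      by_cases hD : y ∈ Dop (A (s ++ [n]))
      · exact hyZ.1.2 (mem_iUnion.2 ⟨n, hD⟩)
      · exact hyZ.2 (mem_iUnion.2 ⟨n, ⟨hyn, hD⟩⟩)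
    refine hOZ.mono (show A s ∩ O ⊆ O \ Z from fun y hy => ⟨hy.2, fun hyZ => ?_⟩)
    exact absurd (mem_inter hy.1 hyZ) (by simp [hAZ])
  set M : Set Y := ⋃ s : List ℕ, B s with hM
  have hMm : IsMeagre M := isMeagre_iUnion' hBm
  -- main inclusion: any point of `Dop (A []) \ M` is in the range
  have main : ∀ x : Y, x ∈ Dop (A []) → x ∉ M → x ∈ range θ := by
    intro x hx hxM
    have step : ∀ s : List ℕ, x ∈ Dop (A s) → ∃ n, x ∈ Dop (A (s ++ [n])) := by
      intro s hs
      by_contra h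
      push_neg at h
      exact hxM (mem_iUnion.2 ⟨s, ⟨hs, by simpa using h⟩⟩)
    let F : (k : ℕ) → {s : List ℕ // s.length = k ∧ x ∈ Dop (A s)} := fun k =>
      Nat.rec ⟨[], rfl, hx⟩
        (fun _ ih => ⟨ih.1 ++ [Classical.choose (step ih.1 ih.2.2)],
          by simp [ih.2.1], Classical.choose_spec (step ih.1 ih.2.2)⟩) k
    set σ : ℕ → ℕ := fun k => Classical.choose (step (F k).1 (F k).2.2) with hσdef
    have hFsucc : ∀ k, (F (k+1)).1 = (F k).1 ++ [σ k] := fun k => rfl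
    have hpre : ∀ k, preL σ k = (F k).1 := by
      intro k
      induction k with
      | zero => simp only [preL, List.range_zero, List.map_nil]; rfl
      | succ k ih => rw [preL_succ, hFsucc, ih]
    -- extract approximating points
    have happrox : ∀ k : ℕ, ∃ q ∈ Metric.closedBall (chainC p σ k) (4/2^k),
        dist x (θ q) < 1/2^k := by
      intro k
      have hxc : x ∈ closure (A (F (k+1)).1) := Dop_subset_closure _ (F (k+1)).2.2
      have hsub := AS_subset_ball p θ (s := (F (k+1)).1) (k := k) (F (k+1)).2.1
      have hxc2 : x ∈ closure (θ '' (Metric.closedBall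
          (chainC p (fun i => ((F (k+1)).1).getD i 0) k) (4/2^k))) :=
        closure_mono hsub hxc
      have hcc : chainC p (fun i => ((F (k+1)).1).getD i 0) k = chainC p σ k := by
        apply chainC_congr
        intro i hi
        rw [← hpre (k+1), preL_getD σ (by omega)]
      rw [hcc] at hxc2
      obtain ⟨b, hb, hbd⟩ := Metric.mem_closure_iff.1 hxc2 (1/2^k) (by positivity)
      obtain ⟨q, hq, rfl⟩ := hb
      exact ⟨q, hq, hbd⟩
    choose q hq1 hq2 using happrox
    have hql : Tendsto q atTop (nhds (chainLim p σ)) := by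
      rw [tendsto_iff_dist_tendsto_zero]
      have hbound : ∀ k, dist (q k) (chainLim p σ) ≤ 8/2^k := by
        intro k
        have h1 := (dist_triangle (q k) (chainC p σ k) (chainLim p σ)).trans
          (add_le_add (by simpa [dist_comm] using (Metric.mem_closedBall.1 (hq1 k)))
            (dist_chainC_chainLim p σ k))
        calc dist (q k) (chainLim p σ) ≤ 4/2^k + 4/2^k := h1
          _ = 8/2^k := by ring
      exact squeeze_zero (fun k => dist_nonneg) hbound (tendsto_c_div_two_pow 8)
    have h1 : Tendsto (fun k => θ (q k)) atTop (nhds (θ (chainLim p σ))) :=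
      (hθ.continuousAt.tendsto).comp hql
    have h2 : Tendsto (fun k => θ (q k)) atTop (nhds x) := by
      rw [tendsto_iff_dist_tendsto_zero]
      exact squeeze_zero (fun k => dist_nonneg) (fun k => by
        simpa [dist_comm] using (hq2 k).le) (tendsto_c_div_two_pow 1)
    exact ⟨chainLim p σ, tendsto_nhds_unique h1 h2⟩
  -- conclude
  have hAnil : A [] = range θ := AS_nil hp θ
  have hDnm : ¬ IsMeagre (Dop (A [])) := by
    intro h
    apply hnm
    rw [← hAnil]
    exact ((isMeagre_diff_Dop (A [])).union' h).mono (fun y hy => by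
      by_cases hD : y ∈ Dop (A [])
      · exact Or.inr hD
      · exact Or.inl ⟨hy, hD⟩)
  obtain ⟨x0, hx0⟩ := (isClosed_Dop (A [])).nonempty_interior_of_not_isMeagre hDnm
  refine ⟨interior (Dop (A [])), isOpen_interior, ⟨x0, hx0⟩, ?_⟩
  refine hMm.mono (fun y hy => ?_)
  by_contra hyM
  exact hy.2 (main y (interior_subset hy.1) hyM)
end Key
section Effros
variable {X : Type*} [MetricSpace X] [CompactSpace X]

/-- The set of points reachable from `z` by a homeomorphism moving all points less than `ε`. -/
def Wset (z : X) (ε : ℝ) : Set X := {y | ∃ h : X ≃ₜ X, h z = y ∧ ∀ t, dist (h t) t < ε}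

/-- Build a homeomorphism from a pair of mutually inverse continuous maps. -/
def mkHomeo (f g : C(X,X)) (h1 : f.comp g = ContinuousMap.id X)
    (h2 : g.comp f = ContinuousMap.id X) : X ≃ₜ X where
  toFun := f
  invFun := g
  left_inv := fun t => ContinuousMap.congr_fun h2 t
  right_inv := fun t => ContinuousMap.congr_fun h1 t
  continuous_toFun := f.continuous
  continuous_invFun := g.continuous

lemma symm_move {h : X ≃ₜ X} {ε : ℝ} (hm : ∀ t, dist (h t) t < ε) (s : X) :
    dist (h.symm s) s < ε := by
  have := hm (h.symm s)
  rwa [h.apply_symm_apply, dist_comm] at this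

lemma Wset_nonmeager (hom : ∀ x y : X, ∃ h : X ≃ₜ X, h x = y) (z : X) {ε : ℝ} (hε : 0 < ε) :
    ¬ IsMeagre (Wset z ε) := by
  intro hmeag
  set J : Set (C(X,X) × C(X,X)) :=
    {fg | fg.1.comp fg.2 = ContinuousMap.id X ∧ fg.2.comp fg.1 = ContinuousMap.id X} with hJ
  haveI : Nonempty ↥J := ⟨⟨(ContinuousMap.id X, ContinuousMap.id X), by simp [hJ]⟩⟩
  set e : ℕ → ↥J := TopologicalSpace.denseSeq ↥J with he
  have hd : DenseRange e := TopologicalSpace.denseRange_denseSeq ↥J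
  set H : ℕ → (X ≃ₜ X) := fun n => mkHomeo (e n).1.1 (e n).1.2 (e n).2.1 (e n).2.2 with hH
  have hcover : ∀ y : X, ∃ n, y ∈ (H n) '' (Wset z ε) := by
    intro y
    obtain ⟨h, hhz⟩ := hom z y
    have hpairJ : ((h : C(X,X)), (h.symm : C(X,X))) ∈ J := by
      constructor
      · exact ContinuousMap.ext fun t => h.apply_symm_apply t
      · exact ContinuousMap.ext fun t => h.symm_apply_apply t
    obtain ⟨n, hn⟩ := Metric.denseRange_iff.1 hd ⟨_, hpairJ⟩ (ε/2) (by positivity)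
    rw [Subtype.dist_eq, Prod.dist_eq] at hn
    have hsnd : dist ((e n).1.2) ((h.symm : C(X,X))) < ε/2 := by
      have := lt_of_le_of_lt (le_max_right (dist ((⟨((h : C(X,X)), (h.symm : C(X,X))),
        hpairJ⟩ : ↥J) : C(X,X) × C(X,X)).1 ((e n) : C(X,X) × C(X,X)).1) _) hn
      rwa [dist_comm] at this
    refine ⟨n, (H n).symm y, ⟨h.trans (H n).symm, ?_, ?_⟩, by simp⟩
    · simp [hhz]
    · intro t
      have h1 : dist (((H n).symm) (h t)) (h.symm (h t)) < ε/2 := by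
        have := ContinuousMap.dist_apply_le_dist (f := (e n).1.2)
          (g := (h.symm : C(X,X))) (h t)
        calc dist (((H n).symm) (h t)) (h.symm (h t))
            = dist ((e n).1.2 (h t)) ((h.symm : C(X,X)) (h t)) := rfl
          _ ≤ dist ((e n).1.2) ((h.symm : C(X,X))) := this
          _ < ε/2 := hsnd
      have h2 : h.symm (h t) = t := h.symm_apply_apply t
      calc dist ((h.trans (H n).symm) t) t
          = dist (((H n).symm) (h t)) (h.symm (h t)) := by
            rw [h2, Homeomorph.trans_apply]
        _ < ε/2 := h1
        _ < ε := by linarith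
  have huniv : (Set.univ : Set X) ⊆ ⋃ n, (H n) '' (Wset z ε) := by
    intro y _
    obtain ⟨n, hn⟩ := hcover y
    exact Set.mem_iUnion.2 ⟨n, hn⟩
  have : IsMeagre (Set.univ : Set X) := by
    refine IsMeagre.mono huniv (isMeagre_iUnion' fun n => ?_)
    rw [Set.image_eq_preimage_of_inverse (H n).symm_apply_apply (H n).apply_symm_apply]
    exact hmeag.preimage_of_isOpenMap (H n).symm.continuous (H n).symm.isOpenMap
  exact (isOpen_univ.not_isMeagre' ⟨z, trivial⟩) this

lemma Wset_comeager (hom : ∀ x y : X, ∃ h : X ≃ₜ X, h x = y) (z : X) {ε : ℝ} (hε : 0 < ε) :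
    ∃ O : Set X, IsOpen O ∧ O.Nonempty ∧ IsMeagre (O \ Wset z ε) := by
  set S : ℕ → Set (C(X,X) × C(X,X)) := fun m =>
    {fg | fg.1.comp fg.2 = ContinuousMap.id X ∧ fg.2.comp fg.1 = ContinuousMap.id X ∧
      ∀ t, dist (fg.1 t) t ≤ ε - 1/(m+1)} with hS
  have hSclosed : ∀ m, IsClosed (S m) := by
    intro m
    have hcomp1 : Continuous fun fg : C(X,X) × C(X,X) => fg.1.comp fg.2 :=
      ContinuousMap.continuous_comp'.comp (continuous_snd.prodMk continuous_fst)
    have hcomp2 : Continuous fun fg : C(X,X) × C(X,X) => fg.2.comp fg.1 :=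
      ContinuousMap.continuous_comp'.comp (continuous_fst.prodMk continuous_snd)
    apply IsClosed.inter
    · exact isClosed_eq hcomp1 continuous_const
    apply IsClosed.inter
    · exact isClosed_eq hcomp2 continuous_const
    · have hre : {fg : C(X,X) × C(X,X) | ∀ t, dist (fg.1 t) t ≤ ε - 1/(m+1)}
          = ⋂ t : X, {fg : C(X,X) × C(X,X) | dist (fg.1 t) t ≤ ε - 1/(m+1)} := by
        ext fg; simp [Set.mem_iInter]
      show IsClosed {fg : C(X,X) × C(X,X) | ∀ t, dist (fg.1 t) t ≤ ε - 1/(m+1)}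
      rw [hre]
      refine isClosed_iInter fun t => ?_
      refine isClosed_le (Continuous.dist ?_ continuous_const) continuous_const
      exact (continuous_eval_const t).comp continuous_fst
  set θ : (m : ℕ) → ↥(S m) → X := fun m fg => fg.1.1 z with hθ
  have hθc : ∀ m, Continuous (θ m) := fun m =>
    ((continuous_eval_const z).comp continuous_fst).comp continuous_subtype_val
  have hunion : Wset z ε = ⋃ m, Set.range (θ m) := by
    ext y
    constructor
    · rintro ⟨h, rfl, hmov⟩
      have hce : Continuous fun t : X => dist (h t) t := h.continuous.dist continuous_id
      obtain ⟨t₀, -, ht₀⟩ := isCompact_univ.exists_isMaxOn ⟨z, trivial⟩ hce.continuousOn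
      obtain ⟨m, hm⟩ := exists_nat_one_div_lt (show 0 < ε - dist (h t₀) t₀ by
        have := hmov t₀; linarith)
      refine Set.mem_iUnion.2 ⟨m, ⟨((h : C(X,X)), (h.symm : C(X,X))),
        ⟨ContinuousMap.ext fun t => h.apply_symm_apply t,
         ContinuousMap.ext fun t => h.symm_apply_apply t, fun t => ?_⟩⟩, rfl⟩
      have h1 : dist (h t) t ≤ dist (h t₀) t₀ := ht₀ (Set.mem_univ t)
      have h2 : (1:ℝ)/(m+1) < ε - dist (h t₀) t₀ := hm
      calc dist ((h : C(X,X)) t) t = dist (h t) t := rfl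
        _ ≤ dist (h t₀) t₀ := h1
        _ ≤ ε - 1/(m+1) := by linarith
    · intro hy
      obtain ⟨m, ⟨⟨fg, hfg1, hfg2, hfg3⟩, rfl⟩⟩ := Set.mem_iUnion.1 hy
      refine ⟨mkHomeo fg.1 fg.2 hfg1 hfg2, rfl, fun t => ?_⟩
      calc dist ((mkHomeo fg.1 fg.2 hfg1 hfg2) t) t = dist (fg.1 t) t := rfl
        _ ≤ ε - 1/(m+1) := hfg3 t
        _ < ε := by
            have : (0:ℝ) < 1/(m+1) := by positivity
            linarith
  have hnm : ∃ m, ¬ IsMeagre (Set.range (θ m)) := by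
    by_contra h
    push_neg at h
    exact Wset_nonmeager hom z hε (by rw [hunion]; exact isMeagre_iUnion' h)
  obtain ⟨m, hm⟩ := hnm
  haveI : CompleteSpace ↥(S m) := (hSclosed m).completeSpace_coe
  obtain ⟨O, hO, hOne, hOm⟩ := exists_isOpen_comeager_range (θ m) (hθc m) hm
  refine ⟨O, hO, hOne, hOm.mono (show O \ Wset z ε ⊆ O \ range (θ m) from fun y hy => ⟨hy.1, fun hyr => hy.2 ?_⟩)⟩
  rw [hunion]
  exact Set.mem_iUnion.2 ⟨m, hyr⟩
end Effros
section Effros2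
variable {X : Type*} [MetricSpace X] [CompactSpace X]

lemma Wset_comeager_nhd (hom : ∀ x y : X, ∃ h : X ≃ₜ X, h x = y) (z : X) {ε : ℝ} (hε : 0 < ε) :
    ∃ O : Set X, IsOpen O ∧ z ∈ O ∧ IsMeagre (O \ Wset z ε) := by
  obtain ⟨O₀, hO₀, hO₀ne, hO₀m⟩ := Wset_comeager hom z (show (0:ℝ) < ε/2 by linarith)
  have hWO : (Wset z (ε/2) ∩ O₀).Nonempty := by
    rcases (Wset z (ε/2) ∩ O₀).eq_empty_or_nonempty with h | h
    · exfalso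
      apply hO₀.not_isMeagre' hO₀ne
      refine hO₀m.mono (show O₀ ⊆ O₀ \ Wset z (ε/2) from fun y hy => ⟨hy, fun hyW => ?_⟩)
      exact absurd (Set.mem_inter hyW hy) (by simp [h])
    · exact h
  obtain ⟨w, ⟨h, hhz, hmov⟩, hwO⟩ := hWO
  refine ⟨(h : X → X) ⁻¹' O₀, hO₀.preimage h.continuous, by simp [hhz, hwO], ?_⟩
  have hsub : ((h : X → X) ⁻¹' O₀) \ Wset z ε ⊆ (h : X → X) ⁻¹' (O₀ \ Wset z (ε/2)) := by
    rintro u ⟨huO, huW⟩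
    refine ⟨huO, fun hWu => huW ?_⟩
    obtain ⟨k, hkz, hkm⟩ := hWu
    refine ⟨k.trans h.symm,
      by rw [Homeomorph.trans_apply, hkz, Homeomorph.symm_apply_apply], fun t => ?_⟩
    calc dist ((k.trans h.symm) t) t = dist (h.symm (k t)) t := by rw [Homeomorph.trans_apply]
      _ ≤ dist (h.symm (k t)) (k t) + dist (k t) t := dist_triangle _ _ _
      _ < ε/2 + ε/2 := add_lt_add (symm_move hmov (k t)) (hkm t)
      _ = ε := by ring
  exact (hO₀m.preimage_of_isOpenMap h.continuous h.isOpenMap).mono hsub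

lemma Wset_mem_interior (hom : ∀ x y : X, ∃ h : X ≃ₜ X, h x = y) (z : X) {ε : ℝ} (hε : 0 < ε) :
    ∃ O : Set X, IsOpen O ∧ z ∈ O ∧ O ⊆ Wset z ε := by
  obtain ⟨O, hO, hzO, hOm⟩ := Wset_comeager_nhd hom z (show (0:ℝ) < ε/2 by linarith)
  refine ⟨O, hO, hzO, fun y hyO => ?_⟩
  obtain ⟨Oy, hOy, hyOy, hOym⟩ := Wset_comeager_nhd hom y (show (0:ℝ) < ε/2 by linarith)
  set U := O ∩ Oy with hU
  have hUne : U.Nonempty := ⟨y, hyO, hyOy⟩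
  have hUopen : IsOpen U := hO.inter hOy
  have : ∃ u ∈ U, u ∈ Wset z (ε/2) ∧ u ∈ Wset y (ε/2) := by
    by_contra hcon
    push_neg at hcon
    apply hUopen.not_isMeagre' hUne
    refine ((hOm.union' hOym).mono fun u hu => ?_)
    rcases Classical.em (u ∈ Wset z (ε/2)) with h1 | h1
    · rcases Classical.em (u ∈ Wset y (ε/2)) with h2 | h2
      · exact absurd h2 (hcon u hu h1)
      · exact Or.inr ⟨hu.2, h2⟩
    · exact Or.inl ⟨hu.1, h1⟩
  obtain ⟨u, huU, ⟨h₁, h₁z, h₁m⟩, ⟨h₂, h₂y, h₂m⟩⟩ := this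
  refine ⟨h₁.trans h₂.symm,
    by rw [Homeomorph.trans_apply, h₁z, ← h₂y, Homeomorph.symm_apply_apply], fun t => ?_⟩
  calc dist ((h₁.trans h₂.symm) t) t = dist (h₂.symm (h₁ t)) t := by rw [Homeomorph.trans_apply]
    _ ≤ dist (h₂.symm (h₁ t)) (h₁ t) + dist (h₁ t) t := dist_triangle _ _ _
    _ < ε/2 + ε/2 := add_lt_add (symm_move h₂m (h₁ t)) (h₁m t)
    _ = ε := by ring

end Effros2

/-- Effros' theorem (metric version): in a homogeneous compact metric space, for every
`ε > 0` and `x`, the set of points `y` reachable from `x` by a homeomorphism moving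
every point less than `ε` is open. -/
theorem effros_open
    {X : Type*} [MetricSpace X] [CompactSpace X]
    (hom : ∀ x y : X, ∃ h : X ≃ₜ X, h x = y)
    (ε : ℝ) (hε : 0 < ε) (x : X) :
    IsOpen {y : X | ∃ h : X ≃ₜ X, h x = y ∧ ∀ t : X, dist (h t) t < ε} := by
  rw [isOpen_iff_forall_mem_open]
  rintro y₀ ⟨h₀, h₀x, h₀m⟩
  have hce : Continuous fun t : X => dist (h₀ t) t := h₀.continuous.dist continuous_id
  obtain ⟨t₀, -, ht₀⟩ := isCompact_univ.exists_isMaxOn ⟨x, trivial⟩ hce.continuousOn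
  set m := dist (h₀ t₀) t₀ with hmdef
  have hmε : m < ε := h₀m t₀
  have hη : 0 < ε - m := by linarith
  obtain ⟨O, hO, hy₀O, hOsub⟩ := Wset_mem_interior hom y₀ hη
  refine ⟨O, fun y hyO => ?_, hO, hy₀O⟩
  obtain ⟨g, hgy₀, hgm⟩ := hOsub hyO
  refine ⟨h₀.trans g, by rw [Homeomorph.trans_apply, h₀x, hgy₀], fun t => ?_⟩
  calc dist ((h₀.trans g) t) t = dist (g (h₀ t)) t := by rw [Homeomorph.trans_apply]
    _ ≤ dist (g (h₀ t)) (h₀ t) + dist (h₀ t) t := dist_triangle _ _ _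
    _ < (ε - m) + m := by
        have h1 : dist (h₀ t) t ≤ m := ht₀ (Set.mem_univ t)
        have h2 := hgm (h₀ t)
        -- dist (g (h₀ t)) (h₀ t) < ε - m, dist (h₀ t) t ≤ m
        have : dist (g (h₀ t)) (h₀ t) < ε - m := h2
        rcases lt_or_eq_of_le h1 with h | h
        · linarith
        · linarith
    _ = ε := by ring
end

section
/- Let Y be a locally connected, simply connected metric continuum, let K be a closed subset of Y, and let x, y ∈ Y ∖ K be points lying in different connected components of Y ∖ K. Let C_x be the connected component of Y ∖ K containing x, and let C_y be the connected component of Y ∖ cl(C_x) containing y. Then the boundary ∂C_y is connected, x and y lie in different connected components of Y ∖ ∂C_y, and no proper closed subset of ∂C_y separates x from y (i.e., for every closed set L ⊊ ∂C_y, x and y lie in the same connected component of Y ∖ L). -/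
open Set Metric unitInterval

-- small connected neighborhoods with closure inside an open set
lemma small_conn_nbhd {Y : Type*} [MetricSpace Y] [LocallyConnectedSpace Y]
    {G : Set Y} (hGo : IsOpen G) {z : Y} (hz : z ∈ G) {ε : ℝ} (hε : 0 < ε) :
    ∃ N : Set Y, IsOpen N ∧ IsPreconnected N ∧ z ∈ N ∧ closure N ⊆ G ∧
      ∀ p ∈ N, ∀ q ∈ N, dist p q ≤ ε := by
  obtain ⟨r, hr, hball⟩ := Metric.isOpen_iff.mp hGo z hz
  set ρ : ℝ := min (r / 2) (ε / 2) with hρdef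
  have hρ : 0 < ρ := lt_min (by linarith) (by linarith)
  refine ⟨connectedComponentIn (ball z ρ) z, Metric.isOpen_ball.connectedComponentIn,
    isPreconnected_connectedComponentIn, mem_connectedComponentIn (mem_ball_self hρ), ?_, ?_⟩
  · refine subset_trans (closure_mono (connectedComponentIn_subset _ _)) ?_
    refine subset_trans Metric.closure_ball_subset_closedBall ?_
    intro w hw
    apply hball
    have : ρ < r := lt_of_le_of_lt (min_le_left _ _) (by linarith)
    exact mem_ball.mpr (lt_of_le_of_lt (mem_closedBall.mp hw) this)
  · intro p hp q hq
    have hp' := connectedComponentIn_subset (ball z ρ) z hp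
    have hq' := connectedComponentIn_subset (ball z ρ) z hq
    have : dist p q ≤ dist p z + dist z q := dist_triangle _ _ _
    have h1 : dist p z < ρ := mem_ball.mp hp'
    have h2 : dist z q < ρ := by rw [dist_comm]; exact mem_ball.mp hq'
    have : dist p q ≤ 2 * ρ := by linarith
    have : 2 * ρ ≤ ε := by
      have := min_le_right (r/2) (ε/2); simp only [← hρdef] at *; linarith
    linarith

/-- A "link" in a chain: a small connected open set with closure inside `G`. -/
def IsLink {Y : Type*} [MetricSpace Y] (G : Set Y) (ε : ℝ) (p q : Y) (N : Set Y) : Prop :=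
  IsOpen N ∧ IsPreconnected N ∧ closure N ⊆ G ∧
    (∀ u ∈ N, ∀ v ∈ N, dist u v ≤ ε) ∧ p ∈ N ∧ q ∈ N

/-- chain existence in an open preconnected set -/
lemma chain_lemma {Y : Type*} [MetricSpace Y] [LocallyConnectedSpace Y]
    {G : Set Y} (hGo : IsOpen G) (hGc : IsPreconnected G)
    {a b : Y} (ha : a ∈ G) (hb : b ∈ G) {ε : ℝ} (hε : 0 < ε) :
    ∃ (m : ℕ) (c : ℕ → Y) (H : ℕ → Set Y), 1 ≤ m ∧ c 0 = a ∧ c m = b ∧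
      ∀ i < m, IsLink G ε (c i) (c (i + 1)) (H (i + 1)) := by
  set S : Set Y := {w | ∃ (m : ℕ) (c : ℕ → Y) (H : ℕ → Set Y), c 0 = a ∧ c m = w ∧
      ∀ i < m, IsLink G ε (c i) (c (i + 1)) (H (i + 1))} with hS
  have hSsubG : S ⊆ G := by
    rintro w ⟨m, c, H, hc0, hcm, hlink⟩
    rcases Nat.eq_zero_or_pos m with hm | hm
    · rw [hm] at hcm; rw [← hcm, hc0]; exact ha
    · obtain ⟨k, rfl⟩ : ∃ k, m = k + 1 := ⟨m - 1, by omega⟩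
      have hl := hlink k (by omega)
      have : w ∈ H (k + 1) := by rw [← hcm]; exact hl.2.2.2.2.2
      exact hl.2.2.1 (subset_closure this)
  have hext : ∀ w ∈ S, ∀ (N : Set Y) (w' : Y), IsLink G ε w w' N → w' ∈ S := by
    rintro w ⟨m, c, H, hc0, hcm, hlink⟩ N w' hN
    refine ⟨m + 1, fun i => if i ≤ m then c i else w', fun i => if i ≤ m then H i else N,
      by simpa using hc0, by simp, ?_⟩
    intro i hi
    rcases Nat.lt_or_ge i m with h | h
    · simp only [if_pos (by omega : i ≤ m), if_pos (by omega : i + 1 ≤ m)]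
      exact hlink i h
    · have : i = m := by omega
      subst this
      simp only [if_pos le_rfl, if_neg (by omega : ¬ i + 1 ≤ i)]
      rw [hcm]
      exact hN
  have hopen : IsOpen S := by
    rw [isOpen_iff_forall_mem_open]
    intro w hw
    obtain ⟨N, hNo, hNc, hwN, hNcl, hNd⟩ := small_conn_nbhd hGo (hSsubG hw) hε
    exact ⟨N, fun w' hw' => hext w hw N w' ⟨hNo, hNc, hNcl, hNd, hwN, hw'⟩, hNo, hwN⟩
  have hTopen : IsOpen (G \ S) := by
    rw [isOpen_iff_forall_mem_open]
    intro w hw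
    obtain ⟨N, hNo, hNc, hwN, hNcl, hNd⟩ := small_conn_nbhd hGo hw.1 hε
    refine ⟨N, fun w' hw' => ⟨hNcl (subset_closure hw'), fun hw'S => hw.2 ?_⟩, hNo, hwN⟩
    exact hext w' hw'S N w ⟨hNo, hNc, hNcl, hNd, hw', hwN⟩
  have haS : a ∈ S := by
    obtain ⟨N, hNo, hNc, hwN, hNcl, hNd⟩ := small_conn_nbhd hGo ha hε
    exact ⟨1, fun _ => a, fun _ => N, rfl, rfl, fun i _ => ⟨hNo, hNc, hNcl, hNd, hwN, hwN⟩⟩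
  have hbS : b ∈ S := by
    by_contra hbS
    obtain ⟨w, -, hwS, hwT⟩ := hGc S (G \ S) hopen hTopen
      (fun z hz => (em (z ∈ S)).elim Or.inl (fun h => Or.inr ⟨hz, h⟩))
      ⟨a, ha, haS⟩ ⟨b, hb, hb, hbS⟩
    exact hwT.2 hwS
  obtain ⟨m, c, H, hc0, hcm, hlink⟩ := hbS
  rcases Nat.eq_zero_or_pos m with hm | hm
  · subst hm
    obtain ⟨N, hNo, hNc, hwN, hNcl, hNd⟩ := small_conn_nbhd hGo ha hε
    refine ⟨1, fun _ => a, fun _ => N, le_rfl, rfl, by rw [← hcm, hc0], ?_⟩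
    exact fun i _ => ⟨hNo, hNc, hNcl, hNd, hwN, hwN⟩
  · exact ⟨m, c, H, hm, hc0, hcm, hlink⟩


structure PStage (Y : Type*) where
  N : ℕ
  z : ℕ → Y
  G : ℕ → Set Y

def StOK {Y : Type*} [MetricSpace Y] (V : Set Y) (ε : ℝ) (a b : Y) (s : PStage Y) : Prop :=
  s.z 0 = a ∧ s.z (2 ^ s.N) = b ∧ ∀ i < 2 ^ s.N,
    IsOpen (s.G (i + 1)) ∧ IsPreconnected (s.G (i + 1)) ∧ s.G (i + 1) ⊆ V ∧
      (∀ p ∈ s.G (i + 1), ∀ q ∈ s.G (i + 1), dist p q ≤ ε) ∧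
      s.z i ∈ s.G (i + 1) ∧ s.z (i + 1) ∈ s.G (i + 1)

def Refines {Y : Type*} [TopologicalSpace Y] (s t : PStage Y) : Prop :=
  s.N ≤ t.N ∧ ∀ i < 2 ^ s.N, ∀ j ≤ 2 ^ (t.N - s.N),
    t.z (i * 2 ^ (t.N - s.N) + j) ∈ s.G (i + 1) ∧
      (1 ≤ j → closure (t.G (i * 2 ^ (t.N - s.N) + j)) ⊆ s.G (i + 1))

lemma stage_refine {Y : Type*} [MetricSpace Y] [LocallyConnectedSpace Y] {V : Set Y}
    {a b : Y} {ε : ℝ} {s : PStage Y} (hs : StOK V ε a b s) {ε' : ℝ} (hε' : 0 < ε') :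
    ∃ t : PStage Y, StOK V ε' a b t ∧ Refines s t := by
  have hchain : ∀ i, ∃ (mi : ℕ) (c : ℕ → Y) (H : ℕ → Set Y), 1 ≤ mi ∧ c 0 = s.z i ∧
      (i < 2 ^ s.N → c mi = s.z (i + 1) ∧
        ∀ k < mi, IsLink (s.G (i + 1)) ε' (c k) (c (k + 1)) (H (k + 1))) := by
    intro i
    rcases Nat.lt_or_ge i (2 ^ s.N) with hi | hi
    · obtain ⟨hGo, hGc, hGV, hGd, hz1, hz2⟩ := hs.2.2 i hi
      obtain ⟨mi, c, H, h1, h2, h3, h4⟩ := chain_lemma hGo hGc hz1 hz2 hε'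
      exact ⟨mi, c, H, h1, h2, fun _ => ⟨h3, h4⟩⟩
    · exact ⟨1, fun _ => s.z i, fun _ => ∅, le_rfl, rfl, fun h => absurd h (by omega)⟩
  choose m c H hm hc0 hcspec using hchain
  set Δ : ℕ := (Finset.range (2 ^ s.N)).sup m with hΔdef
  have hmΔ : ∀ i < 2 ^ s.N, m i ≤ 2 ^ Δ := fun i hi =>
    le_trans (Finset.le_sup (Finset.mem_range.mpr hi)) (Nat.le_of_lt (Nat.lt_two_pow_self (n := Δ)))
  have h2Δ : 0 < 2 ^ Δ := Nat.pow_pos (n := Δ) (by norm_num)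
  have hmem : ∀ i, i < 2 ^ s.N → ∀ l ≤ m i, c i l ∈ s.G (i + 1) ∧
      (1 ≤ l → c i l ∈ H i l ∧ closure (H i l) ⊆ s.G (i + 1)) := by
    intro i hi l hl
    rcases Nat.eq_zero_or_pos l with h0 | h0
    · subst h0
      rw [hc0 i]
      exact ⟨(hs.2.2 i hi).2.2.2.2.1, by omega⟩
    · obtain ⟨l', rfl⟩ : ∃ l', l = l' + 1 := ⟨l - 1, by omega⟩
      have hlk := (hcspec i hi).2 l' (by omega)
      exact ⟨hlk.2.2.1 (subset_closure hlk.2.2.2.2.2), fun _ => ⟨hlk.2.2.2.2.2, hlk.2.2.1⟩⟩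
  refine ⟨⟨s.N + Δ, fun k => c (k / 2 ^ Δ) (min (k % 2 ^ Δ) (m (k / 2 ^ Δ))),
    fun k => H ((k - 1) / 2 ^ Δ) (min ((k - 1) % 2 ^ Δ + 1) (m ((k - 1) / 2 ^ Δ)))⟩, ?_, ?_⟩
  case' refine_1 => refine ⟨?_, ?_, ?_⟩
  case refine_1.refine_1 =>
    show c (0 / 2 ^ Δ) (min (0 % 2 ^ Δ) _) = a
    simp only [Nat.zero_div, Nat.zero_mod, Nat.zero_min]
    rw [hc0 0, hs.1]
  case refine_1.refine_2 =>
    show c (2 ^ (s.N + Δ) / 2 ^ Δ) (min (2 ^ (s.N + Δ) % 2 ^ Δ) _) = b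
    have h1 : 2 ^ (s.N + Δ) = 2 ^ s.N * 2 ^ Δ := pow_add 2 s.N Δ
    have h2 : 2 ^ (s.N + Δ) / 2 ^ Δ = 2 ^ s.N := by rw [h1]; exact Nat.mul_div_cancel _ h2Δ
    have h3 : 2 ^ (s.N + Δ) % 2 ^ Δ = 0 := by rw [h1]; exact Nat.mul_mod_left _ _
    rw [h2, h3]
    simp only [Nat.zero_min]
    rw [hc0 _, hs.2.1]
  case refine_1.refine_3 =>
    intro k hk
    dsimp only at hk ⊢
    have hkk : k < 2 ^ s.N * 2 ^ Δ := by rw [← pow_add]; exact hk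
    obtain ⟨i, j, hij, hi, hj⟩ : ∃ i j, k = j + i * 2 ^ Δ ∧ i < 2 ^ s.N ∧ j < 2 ^ Δ := by
      have hkk' : k < 2 ^ Δ * 2 ^ s.N := by rw [Nat.mul_comm]; exact hkk
      refine ⟨k / 2 ^ Δ, k % 2 ^ Δ, ?_, Nat.div_lt_of_lt_mul hkk', Nat.mod_lt _ h2Δ⟩
      have h1 := Nat.div_add_mod k (2 ^ Δ)
      rw [Nat.mul_comm] at h1
      omega
    have ei : k / 2 ^ Δ = i := by
      rw [hij, Nat.add_mul_div_right _ _ h2Δ, Nat.div_eq_of_lt hj, Nat.zero_add]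
    have ej : k % 2 ^ Δ = j := by
      rw [hij, Nat.add_mul_mod_self_right, Nat.mod_eq_of_lt hj]
    have hzk1 : c ((k + 1) / 2 ^ Δ) (min ((k + 1) % 2 ^ Δ) (m ((k + 1) / 2 ^ Δ)))
        = c i (min (j + 1) (m i)) := by
      rcases Nat.lt_or_ge (j + 1) (2 ^ Δ) with hj1 | hj1
      · have e1 : (k + 1) / 2 ^ Δ = i := by
          rw [show k + 1 = (j + 1) + i * 2 ^ Δ by omega, Nat.add_mul_div_right _ _ h2Δ,
            Nat.div_eq_of_lt hj1, Nat.zero_add]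
        have e2 : (k + 1) % 2 ^ Δ = j + 1 := by
          rw [show k + 1 = (j + 1) + i * 2 ^ Δ by omega, Nat.add_mul_mod_self_right,
            Nat.mod_eq_of_lt hj1]
        rw [e1, e2]
      · have hj2 : j + 1 = 2 ^ Δ := by omega
        have e1 : (k + 1) / 2 ^ Δ = i + 1 := by
          rw [show k + 1 = (i + 1) * 2 ^ Δ by rw [Nat.succ_mul]; omega]
          exact Nat.mul_div_cancel _ h2Δ
        have e2 : (k + 1) % 2 ^ Δ = 0 := by
          rw [show k + 1 = (i + 1) * 2 ^ Δ by rw [Nat.succ_mul]; omega]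
          exact Nat.mul_mod_left _ _
        rw [e1, e2]
        simp only [Nat.zero_min]
        rw [hc0 (i + 1), ← (hcspec i hi).1, min_eq_right (by have := hmΔ i hi; omega)]
    rw [show k + 1 - 1 = k from rfl, hzk1, ei, ej]
    have hGV : s.G (i + 1) ⊆ V := (hs.2.2 i hi).2.2.1
    rcases Nat.lt_or_ge j (m i) with hjm | hjm
    · have e3 : min j (m i) = j := min_eq_left (by omega)
      have e4 : min (j + 1) (m i) = j + 1 := min_eq_left (by omega)
      rw [e3, e4]
      have hlk := (hcspec i hi).2 j hjm
      exact ⟨hlk.1, hlk.2.1, fun z hz => hGV (hlk.2.2.1 (subset_closure hz)),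
        hlk.2.2.2.1, hlk.2.2.2.2.1, hlk.2.2.2.2.2⟩
    · have e3 : min j (m i) = m i := min_eq_right hjm
      have e4 : min (j + 1) (m i) = m i := min_eq_right (by omega)
      rw [e3, e4]
      obtain ⟨l', hl'⟩ : ∃ l', m i = l' + 1 := ⟨m i - 1, by have := hm i; omega⟩
      have hlk := (hcspec i hi).2 l' (by omega)
      rw [hl']
      exact ⟨hlk.1, hlk.2.1, fun z hz => hGV (hlk.2.2.1 (subset_closure hz)),
        hlk.2.2.2.1, hlk.2.2.2.2.2, hlk.2.2.2.2.2⟩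
  case refine_2 =>
    refine ⟨Nat.le_add_right _ _, ?_⟩
    have hΔeq : s.N + Δ - s.N = Δ := by omega
    rw [hΔeq]
    intro i hi j hj
    dsimp only
    constructor
    · rcases Nat.lt_or_ge j (2 ^ Δ) with hj1 | hj1
      · have e1 : (i * 2 ^ Δ + j) / 2 ^ Δ = i := by
          rw [show i * 2 ^ Δ + j = j + i * 2 ^ Δ by omega, Nat.add_mul_div_right _ _ h2Δ,
            Nat.div_eq_of_lt hj1, Nat.zero_add]
        have e2 : (i * 2 ^ Δ + j) % 2 ^ Δ = j := by
          rw [show i * 2 ^ Δ + j = j + i * 2 ^ Δ by omega, Nat.add_mul_mod_self_right,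
            Nat.mod_eq_of_lt hj1]
        rw [e1, e2]
        exact (hmem i hi (min j (m i)) (min_le_right _ _)).1
      · have hj2 : j = 2 ^ Δ := by omega
        subst hj2
        have e1 : (i * 2 ^ Δ + 2 ^ Δ) / 2 ^ Δ = i + 1 := by
          rw [show i * 2 ^ Δ + 2 ^ Δ = (i + 1) * 2 ^ Δ by ring]
          exact Nat.mul_div_cancel _ h2Δ
        have e2 : (i * 2 ^ Δ + 2 ^ Δ) % 2 ^ Δ = 0 := by
          rw [show i * 2 ^ Δ + 2 ^ Δ = (i + 1) * 2 ^ Δ by ring]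
          exact Nat.mul_mod_left _ _
        rw [e1, e2]
        simp only [Nat.zero_min]
        rw [hc0 (i + 1)]
        exact (hs.2.2 i hi).2.2.2.2.2
    · intro hj1
      have e0 : i * 2 ^ Δ + j - 1 = (j - 1) + i * 2 ^ Δ := by omega
      have e1 : ((j - 1) + i * 2 ^ Δ) / 2 ^ Δ = i := by
        rw [Nat.add_mul_div_right _ _ h2Δ, Nat.div_eq_of_lt (by omega), Nat.zero_add]
      have e2 : ((j - 1) + i * 2 ^ Δ) % 2 ^ Δ = j - 1 := by
        rw [Nat.add_mul_mod_self_right, Nat.mod_eq_of_lt (by omega)]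
      rw [e0, e1, e2, show j - 1 + 1 = j by omega]
      have hlmin : 1 ≤ min j (m i) := le_min hj1 (hm i)
      exact ((hmem i hi (min j (m i)) (min_le_right _ _)).2 hlmin).2

lemma joinedIn_of_isOpen_isPreconnected {Y : Type*} [MetricSpace Y] [CompactSpace Y]
    [LocallyConnectedSpace Y] {V : Set Y} (hV : IsOpen V) (hVc : IsPreconnected V)
    {a b : Y} (ha : a ∈ V) (hb : b ∈ V) : JoinedIn V a b := by
  classical
  set C : ℝ := Metric.diam (univ : Set Y) + 1 with hCdef
  have hC : 0 < C := by have := Metric.diam_nonneg (s := (univ : Set Y)); linarith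
  set ε : ℕ → ℝ := fun k => C * (1 / 2) ^ k with hεdef
  have hεpos : ∀ k, 0 < ε k := fun k => by positivity
  have hs0 : StOK V (ε 0) a b ⟨0, fun k => if k = 0 then a else b, fun _ => V⟩ := by
    refine ⟨by simp, by norm_num, ?_⟩
    intro i hi
    have : i = 0 := by simpa using hi
    subst this
    refine ⟨hV, hVc, le_refl _, fun p _ q _ => ?_, by simpa using ha, by norm_num; exact hb⟩
    have h1 : dist p q ≤ Metric.diam (univ : Set Y) :=
      Metric.dist_le_diam_of_mem isCompact_univ.isBounded trivial trivial
    simp only [hεdef, pow_zero, mul_one]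
    linarith
  have hrec : ∀ k (s : PStage Y), StOK V (ε k) a b s →
      ∃ t, StOK V (ε (k + 1)) a b t ∧ Refines s t :=
    fun k s hs => stage_refine hs (hεpos (k + 1))
  choose next hnext1 hnext2 using hrec
  let g : (k : ℕ) → {s : PStage Y // StOK V (ε k) a b s} := fun k =>
    Nat.rec ⟨_, hs0⟩ (fun k p => ⟨next k p.1 p.2, hnext1 k p.1 p.2⟩) k
  have hgsucc : ∀ k, (g (k + 1)).1 = next k (g k).1 (g k).2 := fun k => rfl
  have href : ∀ k, Refines (g k).1 (g (k + 1)).1 := fun k => hnext2 k (g k).1 (g k).2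
  set N : ℕ → ℕ := fun k => (g k).1.N with hNdef
  set z : ℕ → ℕ → Y := fun k => (g k).1.z with hzdef
  set G : ℕ → ℕ → Set Y := fun k => (g k).1.G with hGdef
  have hstok : ∀ k, StOK V (ε k) a b ⟨N k, z k, G k⟩ := fun k => (g k).2
  -- index of u at stage k
  set idx : ℕ → ℝ → ℕ := fun k u => ⌊u * 2 ^ N k⌋₊ with hidxdef
  have hidxlt : ∀ k (u : ℝ), 0 ≤ u → u < 1 → idx k u < 2 ^ N k := by
    intro k u hu0 hu1
    have h2 : (0:ℝ) < 2 ^ N k := by positivity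
    rw [hidxdef]
    refine Nat.floor_lt (by positivity) |>.mpr ?_
    push_cast
    nlinarith
  -- the key single-step refinement facts
  have keystep : ∀ l (u : ℝ), 0 ≤ u → u < 1 →
      closure (G (l + 1) (idx (l + 1) u + 1)) ⊆ G l (idx l u + 1) ∧
      z (l + 1) (idx (l + 1) u) ∈ G l (idx l u + 1) := by
    intro l u hu0 hu1
    obtain ⟨hNle, hR⟩ := href l
    set Δ : ℕ := N (l + 1) - N l with hΔdef
    have hNle' : N l ≤ N (l + 1) := hNle
    have hNeq : N (l + 1) = N l + Δ := by
      rw [hΔdef]; omega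
    have h2Δ : 0 < 2 ^ Δ := Nat.pow_pos (n := Δ) (by norm_num)
    have hdiv : idx (l + 1) u / 2 ^ Δ = idx l u := by
      rw [hidxdef]
      have h1 : (u * 2 ^ N (l + 1)) / (2 ^ Δ : ℕ) = u * 2 ^ N l := by
        push_cast
        rw [hNeq, pow_add]
        field_simp
      calc ⌊u * 2 ^ N (l + 1)⌋₊ / 2 ^ Δ = ⌊(u * 2 ^ N (l + 1)) / (2 ^ Δ : ℕ)⌋₊ :=
            (Nat.floor_div_natCast _ _).symm
        _ = ⌊u * 2 ^ N l⌋₊ := by rw [h1]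
    have hrlt : idx (l + 1) u % 2 ^ Δ < 2 ^ Δ := Nat.mod_lt _ h2Δ
    have hsplit : idx (l + 1) u = idx l u * 2 ^ Δ + idx (l + 1) u % 2 ^ Δ := by
      have := Nat.div_add_mod (idx (l + 1) u) (2 ^ Δ)
      rw [hdiv] at this
      rw [Nat.mul_comm] at this
      omega
    have hilt : idx l u < 2 ^ N l := hidxlt l u hu0 hu1
    constructor
    · have := (hR (idx l u) hilt (idx (l + 1) u % 2 ^ Δ + 1) (by omega)).2 (by omega)
      rw [show idx l u * 2 ^ Δ + (idx (l + 1) u % 2 ^ Δ + 1) = idx (l + 1) u + 1 by omega] at this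
      exact this
    · have := (hR (idx l u) hilt (idx (l + 1) u % 2 ^ Δ) (by omega)).1
      rw [← hsplit] at this
      exact this
  have setmono : ∀ k l, k ≤ l → ∀ (u : ℝ), 0 ≤ u → u < 1 →
      G l (idx l u + 1) ⊆ G k (idx k u + 1) := by
    intro k l hkl
    induction l with
    | zero => intro u _ _; rw [Nat.le_zero.mp hkl]
    | succ l ih =>
      rcases Nat.lt_or_ge k (l + 1) with h | h
      · intro u hu0 hu1
        exact subset_trans (subset_trans subset_closure ((keystep l u hu0 hu1).1))
          (ih (by omega) u hu0 hu1)
      · have : k = l + 1 := by omega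
        subst this
        intro u _ _
        exact subset_refl _
  have memlem : ∀ k l, k ≤ l → ∀ (u : ℝ), 0 ≤ u → u < 1 →
      z l (idx l u) ∈ G k (idx k u + 1) := by
    intro k l hkl u hu0 hu1
    rcases Nat.eq_or_lt_of_le hkl with h | h
    · subst h
      exact ((hstok k).2.2 (idx k u) (hidxlt k u hu0 hu1)).2.2.2.2.1
    · obtain ⟨l', rfl⟩ : ∃ l', l = l' + 1 := ⟨l - 1, by omega⟩
      exact setmono k l' (by omega) u hu0 hu1 ((keystep l' u hu0 hu1).2)
  set fseq : ℕ → ℝ → Y := fun k u => z k (min (idx k u) (2 ^ N k)) with hfseqdef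
  have h2Npos : ∀ k, (0:ℝ) < 2 ^ N k := fun k => by positivity
  have hfseq_lt : ∀ k (u : ℝ), 0 ≤ u → u < 1 → fseq k u = z k (idx k u) := by
    intro k u hu0 hu1
    rw [hfseqdef]
    dsimp only
    rw [min_eq_left (le_of_lt (hidxlt k u hu0 hu1))]
  have hfseq_neg : ∀ k (u : ℝ), u < 0 → fseq k u = a := by
    intro k u hu
    rw [hfseqdef]
    dsimp only
    have h0 : idx k u = 0 := by
      rw [hidxdef]
      exact Nat.floor_of_nonpos (by nlinarith [h2Npos k])
    rw [h0, Nat.zero_min]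
    exact (hstok k).1
  have hfseq_ge : ∀ k (u : ℝ), 1 ≤ u → fseq k u = b := by
    intro k u hu
    rw [hfseqdef]
    dsimp only
    have h0 : 2 ^ N k ≤ idx k u := by
      rw [hidxdef]
      refine Nat.le_floor ?_
      push_cast
      nlinarith [h2Npos k]
    rw [min_eq_right h0]
    exact (hstok k).2.1
  have hfseq0 : ∀ k, fseq k 0 = a := by
    intro k
    rw [hfseqdef]
    dsimp only
    have h0 : idx k 0 = 0 := by rw [hidxdef]; simp
    rw [h0, Nat.zero_min]
    exact (hstok k).1
  have hcauchy : ∀ u : ℝ, CauchySeq (fun k => fseq k u) := by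
    intro u
    apply cauchySeq_of_le_geometric (1/2 : ℝ) C (by norm_num)
    intro k
    rcases lt_or_ge u 0 with hu | hu
    · rw [hfseq_neg k u hu, hfseq_neg (k + 1) u hu, dist_self]
      positivity
    rcases lt_or_ge u 1 with hu1 | hu1
    · rw [hfseq_lt k u hu hu1, hfseq_lt (k + 1) u hu hu1]
      have h1 := memlem k k le_rfl u hu hu1
      have h2 := memlem k (k + 1) (by omega) u hu hu1
      exact ((hstok k).2.2 (idx k u) (hidxlt k u hu hu1)).2.2.2.1 _ h1 _ h2
    · rw [hfseq_ge k u hu1, hfseq_ge (k + 1) u hu1, dist_self]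
      positivity
  have hlim : ∀ u : ℝ, ∃ p, Filter.Tendsto (fun k => fseq k u) Filter.atTop (nhds p) :=
    fun u => cauchySeq_tendsto_of_complete (hcauchy u)
  choose f hf using hlim
  have hfa : ∀ u : ℝ, u < 0 → f u = a := by
    intro u hu
    refine tendsto_nhds_unique (hf u) ?_
    have : (fun k => fseq k u) = fun _ => a := funext fun k => hfseq_neg k u hu
    rw [this]
    exact tendsto_const_nhds
  have hf0 : f 0 = a := by
    refine tendsto_nhds_unique (hf 0) ?_
    have : (fun k => fseq k 0) = fun _ => a := funext fun k => hfseq0 k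
    rw [this]
    exact tendsto_const_nhds
  have hfb : ∀ u : ℝ, 1 ≤ u → f u = b := by
    intro u hu
    refine tendsto_nhds_unique (hf u) ?_
    have : (fun k => fseq k u) = fun _ => b := funext fun k => hfseq_ge k u hu
    rw [this]
    exact tendsto_const_nhds
  have hmemf : ∀ (u : ℝ), 0 ≤ u → u < 1 → ∀ k, f u ∈ G k (idx k u + 1) := by
    intro u hu0 hu1 k
    have hev : ∀ᶠ l in Filter.atTop, fseq l u ∈ G (k + 1) (idx (k + 1) u + 1) :=
      Filter.eventually_atTop.mpr ⟨k + 1, fun l hl => by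
        rw [hfseq_lt l u hu0 hu1]; exact memlem (k + 1) l hl u hu0 hu1⟩
    exact (keystep k u hu0 hu1).1 (mem_closure_of_tendsto (hf u) hev)
  set ψ : ℕ → ℝ → ℕ := fun k u => min (idx k u) (2 ^ N k - 1) with hψdef
  have h2N1 : ∀ k, 1 ≤ 2 ^ N k := fun k => Nat.one_le_two_pow
  have hψlt : ∀ k (u : ℝ), ψ k u < 2 ^ N k := by
    intro k u
    have := h2N1 k
    rw [hψdef]
    dsimp only
    omega
  have hψmem : ∀ k (u : ℝ), f u ∈ G k (ψ k u + 1) := by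
    intro k u
    rcases lt_or_ge u 0 with hu | hu
    · have h0 : idx k u = 0 := by
        rw [hidxdef]; exact Nat.floor_of_nonpos (by nlinarith [h2Npos k])
      have hψ0 : ψ k u = 0 := by rw [hψdef]; dsimp only; rw [h0, Nat.zero_min]
      rw [hfa u hu, hψ0]
      have hmm := ((hstok k).2.2 0 (by show 0 < 2 ^ N k; positivity)).2.2.2.2.1
      rw [(hstok k).1] at hmm
      exact hmm
    rcases lt_or_ge u 1 with hu1 | hu1
    · have : ψ k u = idx k u := by
        have := hidxlt k u hu hu1
        rw [hψdef]; dsimp only; omega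
      rw [this]
      exact hmemf u hu hu1 k
    · have h0 : 2 ^ N k ≤ idx k u := by
        rw [hidxdef]
        refine Nat.le_floor ?_
        push_cast
        nlinarith [h2Npos k]
      have hψ0 : ψ k u = 2 ^ N k - 1 := by rw [hψdef]; dsimp only; omega
      have h1 : (2 ^ N k - 1) + 1 = 2 ^ N k := by have := h2N1 k; omega
      rw [hfb u hu1, hψ0, h1]
      have hmm := ((hstok k).2.2 (2 ^ N k - 1)
        (show 2 ^ N k - 1 < 2 ^ N k by have := h2N1 k; omega)).2.2.2.2.2
      rw [h1] at hmm
      rw [← show z k (2 ^ N k) = b from (hstok k).2.1]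
      exact hmm
  have hψadj : ∀ k (u v : ℝ), u ≤ v → v - u ≤ ((2:ℝ) ^ N k)⁻¹ →
      ψ k u ≤ ψ k v ∧ ψ k v ≤ ψ k u + 1 := by
    intro k u v huv hd
    have hmono : idx k u ≤ idx k v := by
      rw [hidxdef]
      exact Nat.floor_le_floor (by nlinarith [h2Npos k])
    have hupper : idx k v ≤ idx k u + 1 := by
      rcases lt_or_ge (v * 2 ^ N k) 1 with h1 | h1
      · have : idx k v = 0 := by
          rw [hidxdef]
          rcases le_or_gt (v * 2 ^ N k) 0 with h2 | h2
          · exact Nat.floor_of_nonpos h2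
          · exact Nat.floor_eq_zero.mpr h1
        omega
      · have hu0 : 0 ≤ u := by
          by_contra h
          push_neg at h
          have : v * 2 ^ N k ≤ u * 2 ^ N k + 1 := by
            have := h2Npos k
            have h3 : (v - u) * 2 ^ N k ≤ 1 := by
              calc (v - u) * 2 ^ N k ≤ ((2:ℝ) ^ N k)⁻¹ * 2 ^ N k := by
                    apply mul_le_mul_of_nonneg_right hd (le_of_lt this)
                _ = 1 := inv_mul_cancel₀ (ne_of_gt this)
            nlinarith
          nlinarith [h2Npos k]
        have h3 : v * 2 ^ N k ≤ u * 2 ^ N k + 1 := by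
          have h2 := h2Npos k
          have h4 : (v - u) * 2 ^ N k ≤ 1 := by
            calc (v - u) * 2 ^ N k ≤ ((2:ℝ) ^ N k)⁻¹ * 2 ^ N k := by
                  apply mul_le_mul_of_nonneg_right hd (le_of_lt h2)
              _ = 1 := inv_mul_cancel₀ (ne_of_gt h2)
          nlinarith
        rw [hidxdef]
        dsimp only
        calc ⌊v * 2 ^ N k⌋₊ ≤ ⌊u * 2 ^ N k + 1⌋₊ := Nat.floor_le_floor h3
          _ = ⌊u * 2 ^ N k⌋₊ + 1 := by
              rw [Nat.floor_add_one (by positivity)]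
    rw [hψdef]
    dsimp only
    omega
  have hmain : ∀ k (w w' : ℝ), w ≤ w' → w' - w ≤ ((2:ℝ) ^ N k)⁻¹ →
      dist (f w') (f w) ≤ 2 * ε k := by
    intro k w w' hw hd
    obtain ⟨h1, h2⟩ := hψadj k w w' hw hd
    have hm1 := hψmem k w
    have hm2 := hψmem k w'
    have hεk := hεpos k
    have hdistk := fun i hi => ((hstok k).2.2 i hi).2.2.2.1
    rcases Nat.eq_or_lt_of_le h1 with he | hlt
    · rw [← he] at hm2
      have := hdistk (ψ k w) (hψlt k w) _ hm2 _ hm1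
      linarith
    · have he : ψ k w' = ψ k w + 1 := by omega
      rw [he] at hm2
      have hz1 : z k (ψ k w + 1) ∈ G k (ψ k w + 1) :=
        ((hstok k).2.2 (ψ k w) (hψlt k w)).2.2.2.2.2
      have hz2 : z k (ψ k w + 1) ∈ G k (ψ k w + 1 + 1) := by
        have hlt2 : ψ k w + 1 < 2 ^ N k := by rw [← he]; exact hψlt k w'
        exact ((hstok k).2.2 (ψ k w + 1) hlt2).2.2.2.2.1
      have d1 : dist (f w') (z k (ψ k w + 1)) ≤ ε k := by
        have hlt2 : ψ k w + 1 < 2 ^ N k := by rw [← he]; exact hψlt k w'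
        exact hdistk (ψ k w + 1) hlt2 _ hm2 _ hz2
      have d2 : dist (z k (ψ k w + 1)) (f w) ≤ ε k :=
        hdistk (ψ k w) (hψlt k w) _ hz1 _ hm1
      calc dist (f w') (f w) ≤ dist (f w') (z k (ψ k w + 1)) + dist (z k (ψ k w + 1)) (f w) :=
            dist_triangle _ _ _
        _ ≤ 2 * ε k := by linarith
  have hcont : Continuous f := by
    rw [Metric.continuous_iff]
    intro u ε' hε'
    obtain ⟨k, hk⟩ : ∃ k, C * (1 / 2) ^ k < ε' / 4 := by
      obtain ⟨k, hk⟩ := exists_pow_lt_of_lt_one (show (0:ℝ) < ε' / (4 * C) by positivity)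
        (by norm_num : (1:ℝ) / 2 < 1)
      refine ⟨k, ?_⟩
      have h2 : C * (1 / 2) ^ k < C * (ε' / (4 * C)) := mul_lt_mul_of_pos_left hk hC
      have h3 : C * (ε' / (4 * C)) = ε' / 4 := by field_simp
      linarith
    refine ⟨((2:ℝ) ^ N k)⁻¹, by positivity, fun v hv => ?_⟩
    have hb2 : |v - u| ≤ ((2:ℝ) ^ N k)⁻¹ := le_of_lt (by rwa [Real.dist_eq] at hv)
    have hd2 : dist (f v) (f u) ≤ 2 * ε k := by
      rcases le_total u v with h | h
      · exact hmain k u v h (le_trans (le_abs_self _) hb2)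
      · rw [dist_comm]
        exact hmain k v u h (le_trans (le_abs_self _) (by rwa [abs_sub_comm] at hb2))
    have hd3 : dist (f v) (f u) ≤ 2 * (C * (1/2) ^ k) := hd2
    linarith
  have hrange : ∀ u : ℝ, 0 ≤ u → u ≤ 1 → f u ∈ V := by
    intro u hu0 hu1
    rcases lt_or_ge u 1 with h | h
    · exact ((hstok 0).2.2 (idx 0 u) (hidxlt 0 u hu0 h)).2.2.1 (hmemf u hu0 h 0)
    · rw [hfb u h]
      exact hb
  refine ⟨⟨⟨fun t : unitInterval => f t, hcont.comp continuous_subtype_val⟩, ?_, ?_⟩, ?_⟩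
  · show f ((0 : unitInterval) : ℝ) = a
    simpa using hf0
  · show f ((1 : unitInterval) : ℝ) = b
    exact hfb 1 (by norm_num)
  · intro t
    exact hrange t t.2.1 t.2.2

lemma winding_obstruction {Z : Type*} [TopologicalSpace Z] {U W : Set Z}
    (hU : IsOpen U) (hW : IsOpen W) (hUW : U ∪ W = univ)
    (lU lW : Z → ℝ)
    (hconst : ∀ s : Set Z, s ⊆ U ∩ W → IsPreconnected s → ∀ p ∈ s, ∀ q ∈ s,
      lU p - lW p = lU q - lW q)
    {x y : Z} (α : Path x y) (hα : ∀ t, α t ∈ U) (β : Path y x) (hβ : ∀ t, β t ∈ W)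
    (hhom : (α.trans β).Homotopic (Path.refl x)) :
    lU y - lW y = lU x - lW x := by
  classical
  obtain ⟨F⟩ := hhom
  set γ : Path x x := α.trans β with hγdef
  set pI : ℝ → I := Set.projIcc 0 1 zero_le_one with hpIdef
  have hpIc : Continuous pI := continuous_projIcc
  have hpI : ∀ t : ℝ, 0 ≤ t → t ≤ 1 → (pI t : ℝ) = t := by
    intro t h0 h1
    rw [hpIdef, Set.projIcc_of_mem zero_le_one ⟨h0, h1⟩]
  have hpI0 : pI 0 = 0 := Subtype.ext (by rw [hpI 0 le_rfl zero_le_one]; rfl)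
  have hpI1 : pI 1 = 1 := Subtype.ext (by rw [hpI 1 zero_le_one le_rfl]; rfl)
  set Φ : ℝ × ℝ → Z := fun p => F (pI p.1, pI p.2) with hΦdef
  have hΦc : Continuous Φ := F.continuous.comp
    ((hpIc.comp continuous_fst).prodMk (hpIc.comp continuous_snd))
  have hΦ0 : ∀ t : ℝ, Φ (0, t) = γ (pI t) := by
    intro t
    rw [hΦdef]
    dsimp only
    rw [hpI0]
    exact F.apply_zero (pI t)
  have hΦ1 : ∀ t : ℝ, Φ (1, t) = x := by
    intro t
    rw [hΦdef]
    dsimp only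
    rw [hpI1]
    exact F.apply_one (pI t)
  have hΦb0 : ∀ s : ℝ, Φ (s, 0) = x := by
    intro s
    rw [hΦdef]
    dsimp only
    rw [hpI0]
    exact Path.Homotopy.source F (pI s)
  have hΦb1 : ∀ s : ℝ, Φ (s, 1) = x := by
    intro s
    rw [hΦdef]
    dsimp only
    rw [hpI1]
    exact Path.Homotopy.target F (pI s)
  -- path membership facts
  have hγU : ∀ t : ℝ, 0 ≤ t → t ≤ 1 / 2 → γ (pI t) ∈ U := by
    intro t h0 h12
    rw [hγdef, Path.trans_apply]
    rw [dif_pos (by rw [hpI t h0 (by linarith)]; exact h12)]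
    exact hα _
  have hγW : ∀ t : ℝ, 1 / 2 ≤ t → t ≤ 1 → γ (pI t) ∈ W := by
    intro t h12 h1
    rw [hγdef, Path.trans_apply]
    split_ifs with h
    · have ht : (pI t : ℝ) = 1 / 2 := le_antisymm h (by rw [hpI t (by linarith) h1]; exact h12)
      have he : (⟨2 * (pI t : ℝ), (mul_pos_mem_iff zero_lt_two).2 ⟨(pI t).2.1, h⟩⟩ : I) = 1 :=
        Subtype.ext (by show 2 * (pI t : ℝ) = (1 : ℝ); rw [ht]; norm_num)
      rw [he, α.target]
      have := hβ 0
      rwa [β.source] at this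
    · exact hβ _
  -- Lebesgue number and grid
  set O : Bool → Set Z := fun b => bif b then U else W with hOdef
  have hOopen : ∀ b, IsOpen (O b) := by intro b; cases b <;> simpa [hOdef] using (by assumption)
  have hcov : IsCompact (Icc (0:ℝ) 1 ×ˢ Icc (0:ℝ) 1) := isCompact_Icc.prod isCompact_Icc
  obtain ⟨δ, hδ, hball⟩ := lebesgue_number_lemma_of_metric hcov
    (fun b : Bool => (hOopen b).preimage hΦc)
    (by
      intro p _
      have hp : Φ p ∈ U ∪ W := by rw [hUW]; trivial
      rcases hp with h | h
      · exact mem_iUnion.mpr ⟨true, h⟩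
      · exact mem_iUnion.mpr ⟨false, h⟩)
  obtain ⟨M, hM⟩ := exists_nat_gt (1 / δ)
  set n : ℕ := 2 * (M + 1) with hndef
  have hn0 : 0 < n := by omega
  have hnR : (0:ℝ) < n := by exact_mod_cast hn0
  have hinv : 1 / (n:ℝ) < δ := by
    rw [div_lt_iff₀ hnR]
    have h1 : 1 / δ < M + 1 := by
      have : (M:ℝ) < M + 1 := by linarith
      linarith
    have h2 : (1:ℝ) / δ * δ = 1 := by field_simp
    have h3 : ((M:ℝ) + 1) ≤ n := by
      rw [hndef]
      push_cast
      linarith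
    nlinarith [hδ]
  have hsq : ∀ i j : ℕ, ∃ b : Bool, i < n → j < n →
      (Icc ((i:ℝ)/n) ((i+1:ℕ)/n) ×ˢ Icc ((j:ℝ)/n) ((j+1:ℕ)/n)) ⊆ Φ ⁻¹' (O b) := by
    intro i j
    rcases Nat.lt_or_ge i n with hi | hi
    swap
    · exact ⟨true, fun h => absurd h (by omega)⟩
    rcases Nat.lt_or_ge j n with hj | hj
    swap
    · exact ⟨true, fun _ h => absurd h (by omega)⟩
    have hmem : ((i:ℝ)/n, (j:ℝ)/n) ∈ Icc (0:ℝ) 1 ×ˢ Icc (0:ℝ) 1 := by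
      constructor <;> constructor
      · positivity
      · rw [div_le_one hnR]; exact_mod_cast hi.le
      · positivity
      · rw [div_le_one hnR]; exact_mod_cast hj.le
    obtain ⟨b, hb⟩ := hball _ hmem
    refine ⟨b, fun _ _ p hp => hb ?_⟩
    rw [Metric.mem_ball, Prod.dist_eq]
    have hpos : (0:ℝ) ≤ 1 / n := by positivity
    have e1 : dist p.1 ((i:ℝ)/n) ≤ 1/n := by
      rw [Real.dist_eq, abs_le]
      obtain ⟨⟨h1, h2⟩, -⟩ := hp
      push_cast at h2
      rw [add_div] at h2
      constructor <;> linarith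
    have e2 : dist p.2 ((j:ℝ)/n) ≤ 1/n := by
      rw [Real.dist_eq, abs_le]
      obtain ⟨-, h1, h2⟩ := hp
      push_cast at h2
      rw [add_div] at h2
      constructor <;> linarith
    calc max (dist p.1 ((i:ℝ)/n)) (dist p.2 ((j:ℝ)/n)) ≤ 1/n := max_le e1 e2
      _ < δ := hinv
  choose χ hχ using hsq
  set l : Bool → Z → ℝ := fun b => bif b then lU else lW with hldef
  have edge : ∀ (s : Set Z), IsPreconnected s → ∀ b b' : Bool, s ⊆ O b → s ⊆ O b' →
      ∀ p ∈ s, ∀ q ∈ s, l b q - l b p = l b' q - l b' p := by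
    have key : ∀ (s : Set Z), IsPreconnected s → s ⊆ O true → s ⊆ O false →
        ∀ p ∈ s, ∀ q ∈ s, l true q - l true p = l false q - l false p := by
      intro s hs hsu hsv p hp q hq
      simp only [hldef, hOdef, cond_true, cond_false] at *
      have := hconst s (subset_inter hsu hsv) hs p hp q hq
      linarith
    intro s hs b b' hsb hsb' p hp q hq
    cases b <;> cases b'
    · rfl
    · exact (key s hs hsb' hsb p hp q hq).symm
    · exact key s hs hsb hsb' p hp q hq
    · rfl
  have hdivle : ∀ a b : ℕ, a ≤ b → (a:ℝ)/n ≤ (b:ℝ)/n := by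
    intro a b h
    gcongr
  set P : ℕ → ℕ → Z := fun i j => Φ ((i:ℝ)/n, (j:ℝ)/n) with hPdef
  set hE : ℕ → ℕ → Set Z :=
    fun i j => Φ '' ({((i:ℝ)/n)} ×ˢ Icc ((j:ℝ)/n) (((j+1:ℕ):ℝ)/n)) with hhEdef
  set vE : ℕ → ℕ → Set Z :=
    fun i j => Φ '' (Icc ((i:ℝ)/n) (((i+1:ℕ):ℝ)/n) ×ˢ {((j:ℝ)/n)}) with hvEdef
  have hEpre : ∀ i j, IsPreconnected (hE i j) := fun i j =>
    (isPreconnected_singleton.prod isPreconnected_Icc).image _ hΦc.continuousOn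
  have vEpre : ∀ i j, IsPreconnected (vE i j) := fun i j =>
    (isPreconnected_Icc.prod isPreconnected_singleton).image _ hΦc.continuousOn
  have hEmem1 : ∀ i j : ℕ, P i j ∈ hE i j := by
    intro i j
    exact mem_image_of_mem _ ⟨rfl, le_refl _, hdivle j (j+1) (by omega)⟩
  have hEmem2 : ∀ i j : ℕ, P i (j+1) ∈ hE i j := by
    intro i j
    exact mem_image_of_mem _ ⟨rfl, hdivle j (j+1) (by omega), le_refl _⟩
  have vEmem1 : ∀ i j : ℕ, P i j ∈ vE i j := by
    intro i j
    exact mem_image_of_mem _ ⟨⟨le_refl _, hdivle i (i+1) (by omega)⟩, rfl⟩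
  have vEmem2 : ∀ i j : ℕ, P (i+1) j ∈ vE i j := by
    intro i j
    exact mem_image_of_mem _ ⟨⟨hdivle i (i+1) (by omega), le_refl _⟩, rfl⟩
  have hEsub : ∀ i j i' : ℕ, i < n → j < n → (i:ℝ)/n ≤ (i':ℝ)/n →
      (i':ℝ)/n ≤ ((i+1:ℕ):ℝ)/n → hE i' j ⊆ O (χ i j) := by
    intro i j i' hi hj h1 h2
    rw [hhEdef, image_subset_iff]
    intro p hp
    refine hχ i j hi hj ?_
    obtain ⟨hp1, hp2⟩ := hp
    have hp1' : p.1 = (i':ℝ)/n := by simpa using hp1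
    exact ⟨by rw [hp1']; exact ⟨h1, h2⟩, hp2⟩
  have vEsub : ∀ i j j' : ℕ, i < n → j < n → (j:ℝ)/n ≤ (j':ℝ)/n →
      (j':ℝ)/n ≤ ((j+1:ℕ):ℝ)/n → vE i j' ⊆ O (χ i j) := by
    intro i j j' hi hj h1 h2
    rw [hvEdef, image_subset_iff]
    intro p hp
    refine hχ i j hi hj ?_
    obtain ⟨hp1, hp2⟩ := hp
    have hp2' : p.2 = (j':ℝ)/n := by simpa using hp2
    exact ⟨hp1, by rw [hp2']; exact ⟨h1, h2⟩⟩
  set R : ℕ → ℝ := fun i => ∑ j ∈ Finset.range n,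
    (l (χ (min i (n-1)) j) (P i (j+1)) - l (χ (min i (n-1)) j) (P i j)) with hRdef
  -- boundary values of P
  have hPbot : ∀ i : ℕ, P i 0 = x := by
    intro i
    rw [hPdef]
    dsimp only
    rw [show ((0:ℕ):ℝ)/n = 0 by norm_num]
    exact hΦb0 _
  have hPtop : ∀ i : ℕ, P i n = x := by
    intro i
    rw [hPdef]
    dsimp only
    rw [show ((n:ℕ):ℝ)/n = 1 by field_simp]
    exact hΦb1 _
  have hPright : ∀ j : ℕ, P n j = x := by
    intro j
    rw [hPdef]
    dsimp only
    rw [show ((n:ℕ):ℝ)/n = 1 by field_simp]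
    exact hΦ1 _
  -- step between consecutive rows
  have hRstep : ∀ i, i < n → R i = R (i+1) := by
    intro i hi
    have hmini : min i (n-1) = i := by omega
    have hRi : R i = ∑ j ∈ Finset.range n,
        (l (χ i j) (P i (j+1)) - l (χ i j) (P i j)) := by
      rw [hRdef]
      dsimp only
      rw [hmini]
    have hv1 : ∀ j, j < n → hE (i+1) j ⊆ O (χ i j) := fun j hj =>
      hEsub i j (i+1) hi hj (hdivle i (i+1) (by omega)) (le_refl _)
    have hv2 : ∀ j, j < n → hE (i+1) j ⊆ O (χ (min (i+1) (n-1)) j) := by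
      intro j hj
      rcases Nat.lt_or_ge (i+1) n with h | h
      · rw [show min (i+1) (n-1) = i+1 by omega]
        exact hEsub (i+1) j (i+1) h hj (le_refl _) (hdivle (i+1) (i+2) (by omega))
      · rw [show min (i+1) (n-1) = i by omega]
        exact hv1 j hj
    have hRi1 : R (i+1) = ∑ j ∈ Finset.range n,
        (l (χ i j) (P (i+1) (j+1)) - l (χ i j) (P (i+1) j)) := by
      rw [hRdef]
      dsimp only
      refine Finset.sum_congr rfl ?_
      intro j hj
      rw [Finset.mem_range] at hj
      exact edge _ (hEpre (i+1) j) _ _ (hv2 j hj) (hv1 j hj)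
        _ (hEmem1 (i+1) j) _ (hEmem2 (i+1) j)
    set Vv : ℕ → ℝ := fun j =>
      l (χ i (min j (n-1))) (P i j) - l (χ i (min j (n-1))) (P (i+1) j) with hVvdef
    have hterm : ∀ j, j < n →
        (l (χ i j) (P i (j+1)) - l (χ i j) (P i j)) -
        (l (χ i j) (P (i+1) (j+1)) - l (χ i j) (P (i+1) j)) = Vv (j+1) - Vv j := by
      intro j hj
      have hVj : Vv j = l (χ i j) (P i j) - l (χ i j) (P (i+1) j) := by
        rw [hVvdef]
        dsimp only
        rw [min_eq_left (by omega)]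
      have hw1 : vE i (j+1) ⊆ O (χ i j) :=
        vEsub i j (j+1) hi hj (hdivle j (j+1) (by omega)) (le_refl _)
      have hw2 : vE i (j+1) ⊆ O (χ i (min (j+1) (n-1))) := by
        rcases Nat.lt_or_ge (j+1) n with h | h
        · rw [show min (j+1) (n-1) = j+1 by omega]
          exact vEsub i (j+1) (j+1) hi h (le_refl _) (hdivle (j+1) (j+2) (by omega))
        · rw [show min (j+1) (n-1) = j by omega]
          exact hw1
      have hVj1 : Vv (j+1) = l (χ i j) (P i (j+1)) - l (χ i j) (P (i+1) (j+1)) := by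
        rw [hVvdef]
        dsimp only
        exact edge _ (vEpre i (j+1)) _ _ hw2 (hw1)
          _ (vEmem2 i (j+1)) _ (vEmem1 i (j+1))
      rw [hVj, hVj1]
      ring
    have hdiff : R i - R (i+1) = Vv n - Vv 0 := by
      rw [hRi, hRi1, ← Finset.sum_sub_distrib,
        Finset.sum_congr rfl (fun j hj => hterm j (Finset.mem_range.mp hj))]
      exact Finset.sum_range_sub Vv n
    have hV0 : Vv 0 = 0 := by
      rw [hVvdef]
      dsimp only
      rw [hPbot i, hPbot (i+1), sub_self]
    have hVn : Vv n = 0 := by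
      rw [hVvdef]
      dsimp only
      rw [hPtop i, hPtop (i+1), sub_self]
    linarith
  have hRn : R n = 0 := by
    rw [hRdef]
    dsimp only
    refine Finset.sum_eq_zero ?_
    intro j hj
    rw [hPright (j+1), hPright j, sub_self]
  have hall : ∀ i, i ≤ n → R 0 = R i := by
    intro i
    induction i with
    | zero => intro _; rfl
    | succ i ih =>
      intro h
      rw [ih (by omega), hRstep i (by omega)]
  -- evaluate R 0
  set m : ℕ := M + 1 with hmdef
  have hnm : n = m + m := by omega
  have hm0 : 0 < m := by omega
  have hmhalf : ((m:ℕ):ℝ)/n = 1/2 := by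
    rw [hndef]
    push_cast
    rw [div_eq_div_iff (by push_cast; positivity) (by norm_num)]
    ring
  have hP0m : P 0 m = y := by
    rw [hPdef]
    dsimp only
    rw [show ((0:ℕ):ℝ)/n = 0 by norm_num, hΦ0, hmhalf]
    rw [hγdef, Path.trans_apply]
    rw [dif_pos (by rw [hpI _ (by norm_num) (by norm_num)])]
    have hone : ∀ (t : I), (t:ℝ) = 1 → α t = y := by
      intro t ht
      rw [show t = 1 from Subtype.ext ht, α.target]
    exact hone _ (by
      show 2 * (pI (1/2 : ℝ) : ℝ) = (1:ℝ)
      rw [hpI _ (by norm_num) (by norm_num)]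
      norm_num)
  have hΦ0U : ∀ j : ℕ, j + 1 ≤ m → hE 0 j ⊆ O true := by
    intro j hjm
    rw [hhEdef, image_subset_iff]
    rintro p ⟨hp1, hp2⟩
    have hp1' : p.1 = ((0:ℕ):ℝ)/n := by simpa using hp1
    show Φ p ∈ O true
    have hΦp : Φ p = Φ (0, p.2) := by
      rw [show p = (p.1, p.2) from rfl, hp1']
      norm_num
    rw [hΦp, hΦ0]
    simp only [hOdef, cond_true]
    refine hγU p.2 (le_trans (by positivity) hp2.1) (le_trans hp2.2 ?_)
    rw [← hmhalf]
    exact hdivle (j+1) m hjm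
  have hΦ0W : ∀ j : ℕ, m ≤ j → j < n → hE 0 j ⊆ O false := by
    intro j hjm hjn
    rw [hhEdef, image_subset_iff]
    rintro p ⟨hp1, hp2⟩
    have hp1' : p.1 = ((0:ℕ):ℝ)/n := by simpa using hp1
    show Φ p ∈ O false
    have hΦp : Φ p = Φ (0, p.2) := by
      rw [show p = (p.1, p.2) from rfl, hp1']
      norm_num
    rw [hΦp, hΦ0]
    simp only [hOdef, cond_false]
    refine hγW p.2 (le_trans ?_ hp2.1) (le_trans hp2.2 ?_)
    · rw [← hmhalf]
      exact hdivle m j hjm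
    · rw [show (1:ℝ) = ((n:ℕ):ℝ)/n by field_simp]
      exact hdivle (j+1) n (by omega)
  have hR0 : R 0 = (lU (P 0 m) - lU (P 0 0)) + (lW (P 0 (m+m)) - lW (P 0 m)) := by
    have hterm : ∀ j, j < n → (l (χ (min 0 (n-1)) j) (P 0 (j+1)) - l (χ (min 0 (n-1)) j) (P 0 j)) =
        if j + 1 ≤ m then lU (P 0 (j+1)) - lU (P 0 j) else lW (P 0 (j+1)) - lW (P 0 j) := by
      intro j hj
      have hm0n : min 0 (n-1) = 0 := by omega
      rw [hm0n]
      have hvχ : hE 0 j ⊆ O (χ 0 j) :=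
        hEsub 0 j 0 (by omega) hj (le_refl _) (hdivle 0 1 (by omega))
      split_ifs with hjm
      · have := edge _ (hEpre 0 j) _ _ hvχ (hΦ0U j hjm) _ (hEmem1 0 j) _ (hEmem2 0 j)
        simpa [hldef] using this
      · have := edge _ (hEpre 0 j) _ _ hvχ (hΦ0W j (by omega) hj) _ (hEmem1 0 j) _ (hEmem2 0 j)
        simpa [hldef] using this
    rw [hRdef]
    dsimp only
    rw [Finset.sum_congr rfl (fun j hj => hterm j (Finset.mem_range.mp hj))]
    rw [hnm, Finset.sum_range_add]
    have h1 : ∑ j ∈ Finset.range m,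
        (if j + 1 ≤ m then lU (P 0 (j+1)) - lU (P 0 j) else lW (P 0 (j+1)) - lW (P 0 j)) =
        lU (P 0 m) - lU (P 0 0) := by
      rw [Finset.sum_congr rfl (fun j hj => if_pos (by
        have := Finset.mem_range.mp hj; omega))]
      exact Finset.sum_range_sub (fun j => lU (P 0 j)) m
    have h2 : ∑ j ∈ Finset.range m,
        (if (m + j) + 1 ≤ m then lU (P 0 ((m+j)+1)) - lU (P 0 (m+j))
          else lW (P 0 ((m+j)+1)) - lW (P 0 (m+j))) =
        lW (P 0 (m+m)) - lW (P 0 m) := by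
      rw [Finset.sum_congr rfl (fun j hj => if_neg (by omega))]
      exact Finset.sum_range_sub (fun j => lW (P 0 (m + j))) m
    rw [h1, h2]
  have hfinal := hall n le_rfl
  rw [hR0, ← hnm, hRn, hPbot 0, hP0m, hPtop 0] at hfinal
  linarith

/-- In a locally connected space, a point of an open set `F` lying in the closure of a
connected component of `F` lies in that component. -/
lemma mem_connectedComponentIn_of_closure {Y : Type*} [TopologicalSpace Y]
    [LocallyConnectedSpace Y] {F : Set Y} (hF : IsOpen F) {p z : Y} (hp : p ∈ F)
    (hz : z ∈ closure (connectedComponentIn F p)) (hzF : z ∈ F) :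
    z ∈ connectedComponentIn F p := by
  have hzo : IsOpen (connectedComponentIn F z) := hF.connectedComponentIn
  have hzz : z ∈ connectedComponentIn F z := mem_connectedComponentIn hzF
  obtain ⟨w, hw1, hw2⟩ := mem_closure_iff.mp hz _ hzo hzz
  have h1 : connectedComponentIn F z = connectedComponentIn F w := connectedComponentIn_eq hw1
  have h2 : connectedComponentIn F p = connectedComponentIn F w := connectedComponentIn_eq hw2
  rw [h2, ← h1]
  exact hzz

/-- Let `Y` be a locally connected, simply connected metric continuum, `K ⊆ Y` closed,
and let `x, y ∉ K` lie in different connected components of `Y ∖ K`. Let `Cx` be the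
component of `Y ∖ K` containing `x` and `Cy` the component of `Y ∖ cl(Cx)` containing
`y`. Then `∂Cy` is connected, separates `x` from `y`, and no proper closed subset of
`∂Cy` separates `x` from `y`. -/
theorem frontier_component_minimal_separator
    {Y : Type*} [MetricSpace Y] [CompactSpace Y] [ConnectedSpace Y]
    [LocallyConnectedSpace Y] [SimplyConnectedSpace Y]
    (K : Set Y) (hK : IsClosed K)
    (x y : Y) (hx : x ∈ Kᶜ) (hy : y ∈ Kᶜ)
    (hsep : connectedComponentIn Kᶜ x ≠ connectedComponentIn Kᶜ y)
    (Cx Cy : Set Y)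
    (hCx : Cx = connectedComponentIn Kᶜ x)
    (hCy : Cy = connectedComponentIn (closure Cx)ᶜ y) :
    IsConnected (frontier Cy) ∧
    (x ∈ (frontier Cy)ᶜ ∧ y ∈ (frontier Cy)ᶜ ∧
      connectedComponentIn (frontier Cy)ᶜ x ≠ connectedComponentIn (frontier Cy)ᶜ y) ∧
    (∀ L : Set Y, IsClosed L → L ⊂ frontier Cy →
      x ∈ Lᶜ ∧ y ∈ Lᶜ ∧ connectedComponentIn Lᶜ x = connectedComponentIn Lᶜ y) := by
  classical
  have hKo : IsOpen Kᶜ := hK.isOpen_compl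
  have hCxo : IsOpen Cx := hCx ▸ hKo.connectedComponentIn
  have hxCx : x ∈ Cx := hCx ▸ mem_connectedComponentIn hx
  have hCxconn : IsPreconnected Cx := hCx ▸ isPreconnected_connectedComponentIn
  have hclCx : ∀ z, z ∈ closure Cx → z ∈ Kᶜ → z ∈ Cx := by
    intro z hz hzK
    rw [hCx] at hz ⊢
    exact mem_connectedComponentIn_of_closure hKo hx hz hzK
  have hynCx : y ∉ Cx := by
    intro h
    rw [hCx] at h
    exact hsep (connectedComponentIn_eq h)
  have hyW : y ∈ (closure Cx)ᶜ := fun h => hynCx (hclCx y h hy)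
  have hWo : IsOpen (closure Cx)ᶜ := isClosed_closure.isOpen_compl
  have hCyo : IsOpen Cy := hCy ▸ hWo.connectedComponentIn
  have hyCy : y ∈ Cy := hCy ▸ mem_connectedComponentIn hyW
  have hCyW : Cy ⊆ (closure Cx)ᶜ := hCy ▸ connectedComponentIn_subset _ _
  have hCyconn : IsPreconnected Cy := hCy ▸ isPreconnected_connectedComponentIn
  have hCxnclCy : ∀ z ∈ Cx, z ∉ closure Cy := by
    intro z hz hcl
    obtain ⟨w, hw1, hw2⟩ := mem_closure_iff.mp hcl Cx hCxo hz
    exact hCyW hw2 (subset_closure hw1)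
  have hxnclCy : x ∉ closure Cy := hCxnclCy x hxCx
  have hFeq : frontier Cy = closure Cy \ Cy := hCyo.frontier_eq
  have hFcl : IsClosed (frontier Cy) := isClosed_frontier
  have hFclCy : frontier Cy ⊆ closure Cy := frontier_subset_closure
  have hFclCx : frontier Cy ⊆ closure Cx := by
    intro z hz
    rw [hFeq] at hz
    by_contra hzW
    have : z ∈ Cy := by
      rw [hCy]
      exact mem_connectedComponentIn_of_closure hWo hyW (hCy ▸ hz.1) hzW
    exact hz.2 this
  have hxF : x ∈ (frontier Cy)ᶜ := fun h => hxnclCy (hFclCy h)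
  have hyF : y ∈ (frontier Cy)ᶜ := fun h => (hFeq ▸ h).2 hyCy
  have hFcompl : ∀ z, z ∉ frontier Cy → z ∈ Cy ∨ z ∈ (closure Cy)ᶜ := by
    intro z hz
    by_cases h : z ∈ closure Cy
    · left
      by_contra h2
      exact hz (hFeq ▸ ⟨h, h2⟩)
    · right
      exact h
  -- the separation statement (part 2)
  have hsep2 : connectedComponentIn (frontier Cy)ᶜ x ≠ connectedComponentIn (frontier Cy)ᶜ y := by
    intro h
    set D := connectedComponentIn (frontier Cy)ᶜ x with hDdef
    have hyD : y ∈ D := h ▸ mem_connectedComponentIn hyF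
    have hxD : x ∈ D := mem_connectedComponentIn hxF
    have hDc : IsPreconnected D := isPreconnected_connectedComponentIn
    have hDsub : D ⊆ (frontier Cy)ᶜ := connectedComponentIn_subset _ _
    obtain ⟨w, hwD, hw1, hw2⟩ := hDc Cy (closure Cy)ᶜ hCyo isClosed_closure.isOpen_compl
      (fun z hz => hFcompl z (hDsub hz)) ⟨y, hyD, hyCy⟩ ⟨x, hxD, hxnclCy⟩
    exact hw2 (subset_closure hw1)
  -- the key lemma (used for part 3 and part 1)
  have key : ∀ L : Set Y, IsClosed L → L ⊂ frontier Cy →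
      ∃ M : Set Y, IsOpen M ∧ IsPreconnected M ∧ x ∈ M ∧ y ∈ M ∧ M ⊆ Lᶜ := by
    intro L hL hLsub
    obtain ⟨p, hpF, hpL⟩ := exists_of_ssubset hLsub
    set Vp := connectedComponentIn Lᶜ p with hVpdef
    have hVpo : IsOpen Vp := hL.isOpen_compl.connectedComponentIn
    have hpVp : p ∈ Vp := mem_connectedComponentIn hpL
    have hVpc : IsPreconnected Vp := isPreconnected_connectedComponentIn
    have hVpL : Vp ⊆ Lᶜ := connectedComponentIn_subset _ _
    obtain ⟨w1, hw1V, hw1C⟩ := mem_closure_iff.mp (hFclCx hpF) Vp hVpo hpVp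
    obtain ⟨w2, hw2V, hw2C⟩ := mem_closure_iff.mp (hFclCy hpF) Vp hVpo hpVp
    refine ⟨Cx ∪ Vp ∪ Cy, (hCxo.union hVpo).union hCyo, ?_,
      Or.inl (Or.inl hxCx), Or.inr hyCy, ?_⟩
    · have hu1 : IsPreconnected (Cx ∪ Vp) :=
        IsPreconnected.union w1 hw1C hw1V hCxconn hVpc
      exact IsPreconnected.union w2 (Or.inr hw2V) hw2C hu1 hCyconn
    · rintro z (hz | hz)
      · rcases hz with hz | hz
        · exact fun hzL => hCxnclCy z hz (hFclCy (hLsub.1 hzL))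
        · exact hVpL hz
      · exact fun hzL => (hFeq ▸ hLsub.1 hzL).2 hz
  -- part 3
  have part3 : ∀ L : Set Y, IsClosed L → L ⊂ frontier Cy →
      x ∈ Lᶜ ∧ y ∈ Lᶜ ∧ connectedComponentIn Lᶜ x = connectedComponentIn Lᶜ y := by
    intro L hL hLsub
    obtain ⟨M, hMo, hMc, hxM, hyM, hML⟩ := key L hL hLsub
    refine ⟨hML hxM, hML hyM, ?_⟩
    exact connectedComponentIn_eq (hMc.subset_connectedComponentIn hxM hML hyM)
  -- part 1 : frontier Cy is connected
  have hFne : (frontier Cy).Nonempty := by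
    rw [nonempty_iff_ne_empty]
    intro h
    have hclosed : IsClosed Cy := by
      rw [← closure_subset_iff_isClosed]
      intro z hz
      by_contra h2
      have hzF : z ∈ frontier Cy := hFeq ▸ ⟨hz, h2⟩
      rw [h] at hzF
      exact hzF
    rcases isClopen_iff.mp ⟨hclosed, hCyo⟩ with h0 | h0
    · rw [h0] at hyCy
      exact hyCy
    · have : x ∈ Cy := h0 ▸ trivial
      exact hCyW this (subset_closure hxCx)
  have hFconn : IsPreconnected (frontier Cy) := by
    by_contra hnc
    rw [IsPreconnected] at hnc
    push_neg at hnc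
    obtain ⟨u, v, hu, hv, hcov, hne1, hne2, hdisj⟩ := hnc
    set P := frontier Cy \ v with hPdef
    set Q := frontier Cy \ u with hQdef
    have hPcl : IsClosed P := hFcl.sdiff hv
    have hQcl : IsClosed Q := hFcl.sdiff hu
    have hPQ : P ∪ Q = frontier Cy := by
      apply Subset.antisymm
      · exact union_subset diff_subset diff_subset
      · intro z hz
        by_cases hzu : z ∈ u
        · left
          refine ⟨hz, fun hzv => ?_⟩
          have : z ∈ frontier Cy ∩ (u ∩ v) := ⟨hz, hzu, hzv⟩
          rw [hdisj] at this
          exact this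
        · right
          exact ⟨hz, hzu⟩
    have hPQdisj : P ∩ Q = ∅ := by
      rw [eq_empty_iff_forall_notMem]
      rintro z ⟨⟨hzF, hzv⟩, ⟨-, hzu⟩⟩
      rcases hcov hzF with h | h
      · exact hzu h
      · exact hzv h
    have hPne : P.Nonempty := by
      obtain ⟨w, hwF, hwu⟩ := hne1
      refine ⟨w, hwF, fun hwv => ?_⟩
      have : w ∈ frontier Cy ∩ (u ∩ v) := ⟨hwF, hwu, hwv⟩
      rw [hdisj] at this
      exact this
    have hQne : Q.Nonempty := by
      obtain ⟨w, hwF, hwv⟩ := hne2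
      refine ⟨w, hwF, fun hwu => ?_⟩
      have : w ∈ frontier Cy ∩ (u ∩ v) := ⟨hwF, hwu, hwv⟩
      rw [hdisj] at this
      exact this
    have hPss : P ⊂ frontier Cy := by
      rw [ssubset_iff_of_subset diff_subset]
      obtain ⟨w, hwQ⟩ := hQne
      refine ⟨w, hwQ.1, fun hwP => ?_⟩
      have : w ∈ P ∩ Q := ⟨hwP, hwQ⟩
      rw [hPQdisj] at this
      exact this
    have hQss : Q ⊂ frontier Cy := by
      rw [ssubset_iff_of_subset diff_subset]
      obtain ⟨w, hwP⟩ := hPne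
      refine ⟨w, hwP.1, fun hwQ => ?_⟩
      have : w ∈ P ∩ Q := ⟨hwP, hwQ⟩
      rw [hPQdisj] at this
      exact this
    -- paths avoiding P and Q
    obtain ⟨MP, hMPo, hMPc, hxMP, hyMP, hMPL⟩ := key P hPcl hPss
    obtain ⟨MQ, hMQo, hMQc, hxMQ, hyMQ, hMQL⟩ := key Q hQcl hQss
    have hJP : JoinedIn Pᶜ x y :=
      (joinedIn_of_isOpen_isPreconnected hMPo hMPc hxMP hyMP).mono hMPL
    have hJQ : JoinedIn Qᶜ x y :=
      (joinedIn_of_isOpen_isPreconnected hMQo hMQc hxMQ hyMQ).mono hMQL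
    obtain ⟨α, hα⟩ := hJP
    obtain ⟨β, hβ⟩ := hJQ.symm
    have hcontra := winding_obstruction (U := Pᶜ) (W := Qᶜ) hPcl.isOpen_compl hQcl.isOpen_compl
      (by rw [← compl_inter, hPQdisj, compl_empty])
      (fun z => if z ∈ closure Cy then 0 else 2 * Real.pi) (fun _ => 0)
      ?_ α hα β hβ (SimplyConnectedSpace.paths_homotopic _ _)
    · rw [if_pos (subset_closure hyCy), if_neg hxnclCy] at hcontra
      have hπ : Real.pi > 0 := Real.pi_pos
      norm_num at hcontra
    · intro s hsub hsc p hp q hq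
      have hsubF : s ⊆ Cy ∪ (closure Cy)ᶜ := by
        intro z hz
        have : z ∉ frontier Cy := by
          intro hzF
          rcases (hPQ ▸ hzF : z ∈ P ∪ Q) with h | h
          · exact (hsub hz).1 h
          · exact (hsub hz).2 h
        exact (hFcompl z this).imp id id
      have honeside : s ⊆ Cy ∨ s ⊆ (closure Cy)ᶜ := by
        by_contra hcon
        push_neg at hcon
        obtain ⟨h1, h2⟩ := hcon
        rw [not_subset] at h1 h2
        obtain ⟨z1, hz1s, hz1⟩ := h1
        obtain ⟨z2, hz2s, hz2⟩ := h2
        have hz1' : z1 ∈ (closure Cy)ᶜ := (hsubF hz1s).resolve_left hz1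
        have hz2' : z2 ∈ Cy := by
          rcases hsubF hz2s with h | h
          · exact h
          · exact absurd h hz2
        obtain ⟨w, hws, hw1, hw2⟩ := hsc Cy (closure Cy)ᶜ hCyo isClosed_closure.isOpen_compl
          hsubF ⟨z2, hz2s, hz2'⟩ ⟨z1, hz1s, hz1'⟩
        exact hw2 (subset_closure hw1)
      rcases honeside with h | h
      · rw [if_pos (subset_closure (h hp)), if_pos (subset_closure (h hq))]
      · rw [if_neg (h hp), if_neg (h hq)]
  exact ⟨⟨hFne, hFconn⟩, ⟨hxF, hyF, hsep2⟩, part3⟩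
end
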